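/- arXiv:2002.08212 — 3 statements merged into one kernel-verified Lean document; each statement's English description precedes it below -/
import Mathlib

section
/- Chaining bound: Let R₁ = [0,a] × [0,b] with a,b ∈ [0,1], let 𝒢ₙ = {(k·2^{-4n}, ℓ·2^{-2n}) : k, ℓ ∈ ℕ}, 𝒢 = ∪ₙ 𝒢ₙ, and let (δₙ)_{n≥0} be a sequence of nonnegative reals. Suppose g : R₁ → ℝ^d satisfies |g(p¹) - g(p²)| ≤ δₙ for every n ≥ 0 and every nearest-neighbor pair p¹, p² ∈ 𝒢ₙ ∩ R₁. Then for all p¹, p² ∈ 𝒢 ∩ R₁, |g(p¹) - g(p²)| ≤ 40 · Σ_{n=n₀}^∞ δₙ, where n₀ is the integer part of log₂(1/Δ(p¹ - p²)) and Δ(t,x) = max(|t|^{1/4}, |x|^{1/2}). -/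
open scoped ENNReal

/-- The parabolic gauge `Δ(t,x) = max(|t|^{1/4}, |x|^{1/2})`. -/
noncomputable def Delta (p : ℝ × ℝ) : ℝ :=
  max (|p.1| ^ ((1 : ℝ) / 4)) (|p.2| ^ ((1 : ℝ) / 2))

/-- The anisotropic grid `𝒢ₙ = {(k 2^{-4n}, ℓ 2^{-2n}) : k, ℓ ∈ ℕ}`. -/
def grid (n : ℕ) : Set (ℝ × ℝ) :=
  {p | ∃ k l : ℕ, p = ((k : ℝ) * 2 ^ (-(4 * n : ℤ)), (l : ℝ) * 2 ^ (-(2 * n : ℤ)))}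

/-- `p` and `q` are nearest neighbors in `𝒢ₙ`: they differ by `2^{-4n}` in the first
coordinate or by `2^{-2n}` in the second coordinate. -/
def IsNN (n : ℕ) (p q : ℝ × ℝ) : Prop :=
  (|p.1 - q.1| = 2 ^ (-(4 * n : ℤ)) ∧ p.2 = q.2) ∨
  (p.1 = q.1 ∧ |p.2 - q.2| = 2 ^ (-(2 * n : ℤ)))

set_option linter.unusedVariables false
set_option linter.deprecated false in
lemma cancel4' (c : ℕ) : (2:ℝ) ^ c * 2 ^ (-(c:ℤ)) = 1 := by
  rw [← zpow_natCast (2:ℝ) c, ← zpow_add₀ (by norm_num : (2:ℝ) ≠ 0)]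
  simp

lemma quarter_pow (x c : ℝ) (hc : 0 ≤ c) (h : |x| ^ ((1:ℝ)/4) ≤ c) : |x| ≤ c ^ (4:ℕ) := by
  have h4 : (|x| ^ ((1:ℝ)/4)) ^ (4:ℕ) ≤ c ^ (4:ℕ) :=
    pow_le_pow_left₀ (Real.rpow_nonneg (abs_nonneg x) _) h 4
  rwa [← Real.rpow_natCast (|x| ^ ((1:ℝ)/4)) 4, ← Real.rpow_mul (abs_nonneg x), (by norm_num : (1:ℝ)/4 * (4:ℕ) = 1), Real.rpow_one] at h4

lemma half_pow (x c : ℝ) (hc : 0 ≤ c) (h : |x| ^ ((1:ℝ)/2) ≤ c) : |x| ≤ c ^ (2:ℕ) := by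
  have h2 : (|x| ^ ((1:ℝ)/2)) ^ (2:ℕ) ≤ c ^ (2:ℕ) :=
    pow_le_pow_left₀ (Real.rpow_nonneg (abs_nonneg x) _) h 2
  rwa [← Real.rpow_natCast (|x| ^ ((1:ℝ)/2)) 2, ← Real.rpow_mul (abs_nonneg x), (by norm_num : (1:ℝ)/2 * (2:ℕ) = 1), Real.rpow_one] at h2

lemma zpow_collect (n₀ c : ℕ) : ((2:ℝ) ^ (-(n₀:ℤ))) ^ (c:ℕ) = 2 ^ (-(c * n₀ : ℤ)) := by
  rw [← zpow_natCast ((2:ℝ) ^ (-(n₀:ℤ))) c, ← zpow_mul]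
  congr 1
  push_cast
  ring


lemma pt_eq4 (n K : ℕ) : ((K:ℕ):ℝ) * 2 ^ (-(4*(n:ℕ):ℤ)) = ((16 * K : ℕ):ℝ) * 2 ^ (-(4*((n+1:ℕ)):ℤ)) := by
  have h : (2:ℝ) ^ (-(4*((n+1:ℕ)):ℤ)) = 2 ^ (-(4*(n:ℕ):ℤ)) * 2 ^ (-4:ℤ) := by
    rw [← zpow_add₀ (by norm_num : (2:ℝ) ≠ 0)]; congr 1; push_cast; ring
  rw [h, show (2:ℝ)^(-4:ℤ) = 1/16 from by norm_num]
  push_cast; ring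
lemma pt_eq2 (n L : ℕ) : ((L:ℕ):ℝ) * 2 ^ (-(2*(n:ℕ):ℤ)) = ((4 * L : ℕ):ℝ) * 2 ^ (-(2*((n+1:ℕ)):ℤ)) := by
  have h : (2:ℝ) ^ (-(2*((n+1:ℕ)):ℤ)) = 2 ^ (-(2*(n:ℕ):ℤ)) * 2 ^ (-2:ℤ) := by
    rw [← zpow_add₀ (by norm_num : (2:ℝ) ≠ 0)]; congr 1; push_cast; ring
  rw [h, show (2:ℝ)^(-2:ℤ) = 1/4 from by norm_num]
  push_cast; ring
lemma exact_pow (x : ℝ) (kp m N : ℕ) (hx : x = (kp:ℝ) * 2 ^ (-(4*(m:ℕ):ℤ))) (hmN : m ≤ N) :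
    x * 2 ^ (4*N) = ((kp * 2 ^ (4*(N-m)) : ℕ) : ℝ) := by
  subst hx
  have h : (2:ℝ) ^ (-(4*(m:ℕ):ℤ)) * 2 ^ (4*N) = 2 ^ (4*(N-m)) := by
    rw [← zpow_natCast (2:ℝ) (4*N), ← zpow_natCast (2:ℝ) (4*(N-m)),
      ← zpow_add₀ (by norm_num : (2:ℝ) ≠ 0)]
    congr 1; push_cast; omega
  push_cast
  rw [mul_assoc, h]
lemma exact_pow2 (x : ℝ) (lp m N : ℕ) (hx : x = (lp:ℝ) * 2 ^ (-(2*(m:ℕ):ℤ))) (hmN : m ≤ N) :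
    x * 2 ^ (2*N) = ((lp * 2 ^ (2*(N-m)) : ℕ) : ℝ) := by
  subst hx
  have h : (2:ℝ) ^ (-(2*(m:ℕ):ℤ)) * 2 ^ (2*N) = 2 ^ (2*(N-m)) := by
    rw [← zpow_natCast (2:ℝ) (2*N), ← zpow_natCast (2:ℝ) (2*(N-m)),
      ← zpow_add₀ (by norm_num : (2:ℝ) ≠ 0)]
    congr 1; push_cast; omega
  push_cast
  rw [mul_assoc, h]

lemma cancel4 (n : ℕ) : (2:ℝ) ^ (4*n) * 2 ^ (-(4*(n:ℕ):ℤ)) = 1 := by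
  rw [← zpow_natCast (2:ℝ) (4*n), ← zpow_add₀ (by norm_num : (2:ℝ) ≠ 0)]
  norm_num

lemma cancel2 (n : ℕ) : (2:ℝ) ^ (2*n) * 2 ^ (-(2*(n:ℕ):ℤ)) = 1 := by
  rw [← zpow_natCast (2:ℝ) (2*n), ← zpow_add₀ (by norm_num : (2:ℝ) ≠ 0)]
  norm_num

lemma proj_le4 (x : ℝ) (hx : 0 ≤ x) (n : ℕ) :
    ((⌊x * 2^(4*n)⌋₊:ℕ):ℝ) * 2^(-(4*(n:ℕ):ℤ)) ≤ x := by
  have h1 : ((⌊x * 2^(4*n)⌋₊:ℕ):ℝ) ≤ x * 2^(4*n) := Nat.floor_le (by positivity)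
  have h2 : (0:ℝ) < 2^(-(4*(n:ℕ):ℤ)) := by positivity
  calc ((⌊x * 2^(4*n)⌋₊:ℕ):ℝ) * 2^(-(4*(n:ℕ):ℤ)) ≤ (x * 2^(4*n)) * 2^(-(4*(n:ℕ):ℤ)) :=
        mul_le_mul_of_nonneg_right h1 h2.le
    _ = x := by rw [mul_assoc, cancel4, mul_one]

lemma proj_le2 (x : ℝ) (hx : 0 ≤ x) (n : ℕ) :
    ((⌊x * 2^(2*n)⌋₊:ℕ):ℝ) * 2^(-(2*(n:ℕ):ℤ)) ≤ x := by
  have h1 : ((⌊x * 2^(2*n)⌋₊:ℕ):ℝ) ≤ x * 2^(2*n) := Nat.floor_le (by positivity)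
  have h2 : (0:ℝ) < 2^(-(2*(n:ℕ):ℤ)) := by positivity
  calc ((⌊x * 2^(2*n)⌋₊:ℕ):ℝ) * 2^(-(2*(n:ℕ):ℤ)) ≤ (x * 2^(2*n)) * 2^(-(2*(n:ℕ):ℤ)) :=
        mul_le_mul_of_nonneg_right h1 h2.le
    _ = x := by rw [mul_assoc, cancel2, mul_one]

lemma step_lb4 (x : ℝ) (hx : 0 ≤ x) (n : ℕ) :
    16 * ⌊x * 2^(4*n)⌋₊ ≤ ⌊x * 2^(4*(n+1))⌋₊ := by
  rw [Nat.le_floor_iff (by positivity)]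
  have h1 : ((⌊x * 2^(4*n)⌋₊:ℕ):ℝ) ≤ x * 2^(4*n) := Nat.floor_le (by positivity)
  have h2 : (2:ℝ)^(4*(n+1)) = 2^(4*n) * 16 := by
    rw [show 4*(n+1) = 4*n + 4 from by ring, pow_add]; norm_num
  push_cast
  rw [h2]
  nlinarith
lemma step_ub4 (x : ℝ) (hx : 0 ≤ x) (n : ℕ) :
    ⌊x * 2^(4*(n+1))⌋₊ ≤ 16 * ⌊x * 2^(4*n)⌋₊ + 15 := by
  have h0 : ⌊x * 2^(4*(n+1))⌋₊ < 16 * ⌊x * 2^(4*n)⌋₊ + 16 := by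
    rw [Nat.floor_lt (by positivity)]
    have h1 : x * 2^(4*n) < (⌊x * 2^(4*n)⌋₊:ℝ) + 1 := Nat.lt_floor_add_one _
    have h2 : (2:ℝ)^(4*(n+1)) = 2^(4*n) * 16 := by
      rw [show 4*(n+1) = 4*n + 4 from by ring, pow_add]; norm_num
    push_cast
    rw [h2]
    nlinarith
  omega
lemma step_lb2 (x : ℝ) (hx : 0 ≤ x) (n : ℕ) :
    4 * ⌊x * 2^(2*n)⌋₊ ≤ ⌊x * 2^(2*(n+1))⌋₊ := by
  rw [Nat.le_floor_iff (by positivity)]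
  have h1 : ((⌊x * 2^(2*n)⌋₊:ℕ):ℝ) ≤ x * 2^(2*n) := Nat.floor_le (by positivity)
  have h2 : (2:ℝ)^(2*(n+1)) = 2^(2*n) * 4 := by
    rw [show 2*(n+1) = 2*n + 2 from by ring, pow_add]; norm_num
  push_cast
  rw [h2]
  nlinarith
lemma step_ub2 (x : ℝ) (hx : 0 ≤ x) (n : ℕ) :
    ⌊x * 2^(2*(n+1))⌋₊ ≤ 4 * ⌊x * 2^(2*n)⌋₊ + 3 := by
  have h0 : ⌊x * 2^(2*(n+1))⌋₊ < 4 * ⌊x * 2^(2*n)⌋₊ + 4 := by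
    rw [Nat.floor_lt (by positivity)]
    have h1 : x * 2^(2*n) < (⌊x * 2^(2*n)⌋₊:ℝ) + 1 := Nat.lt_floor_add_one _
    have h2 : (2:ℝ)^(2*(n+1)) = 2^(2*n) * 4 := by
      rw [show 2*(n+1) = 2*n + 2 from by ring, pow_add]; norm_num
    push_cast
    rw [h2]
    nlinarith
  omega

lemma close4 (x y : ℝ) (hx : 0 ≤ x) (hy : 0 ≤ y) (n : ℕ)
    (h : x ≤ y + 2^(-(4*(n:ℕ):ℤ))) : ⌊x * 2^(4*n)⌋₊ ≤ ⌊y * 2^(4*n)⌋₊ + 1 := by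
  have hxy : x * 2^(4*n) ≤ y * 2^(4*n) + 1 := by
    have hp : (0:ℝ) < 2^(4*n) := by positivity
    nlinarith [cancel4 n]
  calc ⌊x * 2^(4*n)⌋₊ ≤ ⌊y * 2^(4*n) + 1⌋₊ := Nat.floor_le_floor hxy
    _ = ⌊y * 2^(4*n)⌋₊ + 1 := Nat.floor_add_one (by positivity)
lemma close2 (x y : ℝ) (hx : 0 ≤ x) (hy : 0 ≤ y) (n : ℕ)
    (h : x ≤ y + 2^(-(2*(n:ℕ):ℤ))) : ⌊x * 2^(2*n)⌋₊ ≤ ⌊y * 2^(2*n)⌋₊ + 1 := by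
  have hxy : x * 2^(2*n) ≤ y * 2^(2*n) + 1 := by
    have hp : (0:ℝ) < 2^(2*n) := by positivity
    nlinarith [cancel2 n]
  calc ⌊x * 2^(2*n)⌋₊ ≤ ⌊y * 2^(2*n) + 1⌋₊ := Nat.floor_le_floor hxy
    _ = ⌊y * 2^(2*n)⌋₊ + 1 := Nat.floor_add_one (by positivity)


lemma exact_proj4 (x : ℝ) (kp m N : ℕ) (hx : x = (kp:ℝ) * 2 ^ (-(4*(m:ℕ):ℤ))) (hmN : m ≤ N) :
    ((⌊x * 2^(4*N)⌋₊:ℕ):ℝ) * 2^(-(4*(N:ℕ):ℤ)) = x := by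
  have he := exact_pow x kp m N hx hmN
  rw [he, Nat.floor_natCast, ← he, mul_assoc, cancel4, mul_one]

lemma exact_proj2 (x : ℝ) (lp m N : ℕ) (hx : x = (lp:ℝ) * 2 ^ (-(2*(m:ℕ):ℤ))) (hmN : m ≤ N) :
    ((⌊x * 2^(2*N)⌋₊:ℕ):ℝ) * 2^(-(2*(N:ℕ):ℤ)) = x := by
  have he := exact_pow2 x lp m N hx hmN
  rw [he, Nat.floor_natCast, ← he, mul_assoc, cancel2, mul_one]

section Aux
variable {d : ℕ} {a b : ℝ} {δ : ℕ → ℝ} {g : ℝ × ℝ → EuclideanSpace ℝ (Fin d)}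
  {R₁ : Set (ℝ × ℝ)}

lemma memR (hR₁ : R₁ = Set.Icc 0 a ×ˢ Set.Icc 0 b) (x y : ℝ) :
    (x, y) ∈ R₁ ↔ (0 ≤ x ∧ x ≤ a) ∧ (0 ≤ y ∧ y ≤ b) := by
  subst hR₁; simp [Set.mem_prod, Set.mem_Icc, Prod.le_def]; tauto

lemma hpos4 (n : ℕ) : (0:ℝ) < 2 ^ (-(4 * n : ℤ)) := by positivity
lemma hpos2 (n : ℕ) : (0:ℝ) < 2 ^ (-(2 * n : ℤ)) := by positivity

lemma path_t (hδ : ∀ n, 0 ≤ δ n) (hR₁ : R₁ = Set.Icc 0 a ×ˢ Set.Icc 0 b)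
    (hg : ∀ n : ℕ, ∀ p q : ℝ × ℝ, p ∈ grid n ∩ R₁ → q ∈ grid n ∩ R₁ → IsNN n p q →
      ‖g p - g q‖ ≤ δ n)
    (n l : ℕ) : ∀ k₂ k₁ : ℕ, k₁ ≤ k₂ →
    ((k₂ : ℝ) * 2 ^ (-(4 * n : ℤ)), (l : ℝ) * 2 ^ (-(2 * n : ℤ))) ∈ R₁ →
    ‖g ((k₁ : ℝ) * 2 ^ (-(4 * n : ℤ)), (l : ℝ) * 2 ^ (-(2 * n : ℤ))) -
      g ((k₂ : ℝ) * 2 ^ (-(4 * n : ℤ)), (l : ℝ) * 2 ^ (-(2 * n : ℤ)))‖ ≤ ((k₂ - k₁ : ℕ) : ℝ) * δ n := by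
  set h : ℝ := 2 ^ (-(4 * n : ℤ)) with hh
  set s : ℝ := 2 ^ (-(2 * n : ℤ)) with hs
  intro k₂
  induction k₂ with
  | zero =>
    intro k₁ hk _
    have : k₁ = 0 := by omega
    subst this; simp
  | succ m ih =>
    intro k₁ hk hmem
    rcases Nat.eq_or_lt_of_le hk with rfl | hlt
    · simp
    · have hk' : k₁ ≤ m := by omega
      have hmm : ((m:ℝ) * h, (l:ℝ) * s) ∈ R₁ := by
        rw [memR hR₁] at hmem ⊢
        refine ⟨⟨by positivity, le_trans ?_ hmem.1.2⟩, hmem.2⟩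
        have : (m:ℝ) ≤ ((m+1 : ℕ) : ℝ) := by push_cast; linarith
        nlinarith [hpos4 n, this]
      have step : ‖g ((m:ℝ) * h, (l:ℝ) * s) - g (((m+1:ℕ):ℝ) * h, (l:ℝ) * s)‖ ≤ δ n := by
        refine hg n _ _ ⟨⟨m, l, rfl⟩, hmm⟩ ⟨⟨m+1, l, rfl⟩, hmem⟩ (Or.inl ⟨?_, rfl⟩)
        show |(m:ℝ) * h - ((m+1:ℕ):ℝ) * h| = h
        push_cast
        rw [show (m:ℝ) * h - ((m:ℝ)+1) * h = -h by ring, abs_neg, abs_of_pos (hpos4 n)]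
      calc ‖g ((k₁:ℝ) * h, (l:ℝ) * s) - g (((m+1:ℕ):ℝ) * h, (l:ℝ) * s)‖
          ≤ ‖g ((k₁:ℝ) * h, (l:ℝ) * s) - g ((m:ℝ) * h, (l:ℝ) * s)‖ +
            ‖g ((m:ℝ) * h, (l:ℝ) * s) - g (((m+1:ℕ):ℝ) * h, (l:ℝ) * s)‖ :=
            norm_sub_le_norm_sub_add_norm_sub _ _ _
        _ ≤ ((m - k₁ : ℕ) : ℝ) * δ n + δ n := add_le_add (ih k₁ hk' hmm) step
        _ ≤ ((m + 1 - k₁ : ℕ) : ℝ) * δ n := by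
            rw [Nat.cast_sub hk', Nat.cast_sub (by omega)]
            push_cast; nlinarith [hδ n]

lemma path_x (hδ : ∀ n, 0 ≤ δ n) (hR₁ : R₁ = Set.Icc 0 a ×ˢ Set.Icc 0 b)
    (hg : ∀ n : ℕ, ∀ p q : ℝ × ℝ, p ∈ grid n ∩ R₁ → q ∈ grid n ∩ R₁ → IsNN n p q →
      ‖g p - g q‖ ≤ δ n)
    (n k : ℕ) : ∀ l₂ l₁ : ℕ, l₁ ≤ l₂ →
    ((k : ℝ) * 2 ^ (-(4 * n : ℤ)), (l₂ : ℝ) * 2 ^ (-(2 * n : ℤ))) ∈ R₁ →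
    ‖g ((k : ℝ) * 2 ^ (-(4 * n : ℤ)), (l₁ : ℝ) * 2 ^ (-(2 * n : ℤ))) -
      g ((k : ℝ) * 2 ^ (-(4 * n : ℤ)), (l₂ : ℝ) * 2 ^ (-(2 * n : ℤ)))‖ ≤ ((l₂ - l₁ : ℕ) : ℝ) * δ n := by
  set h : ℝ := 2 ^ (-(4 * n : ℤ)) with hh
  set s : ℝ := 2 ^ (-(2 * n : ℤ)) with hs
  intro l₂
  induction l₂ with
  | zero =>
    intro l₁ hl _
    have : l₁ = 0 := by omega
    subst this; simp
  | succ m ih =>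
    intro l₁ hl hmem
    rcases Nat.eq_or_lt_of_le hl with rfl | hlt
    · simp
    · have hl' : l₁ ≤ m := by omega
      have hmm : ((k:ℝ) * h, (m:ℝ) * s) ∈ R₁ := by
        rw [memR hR₁] at hmem ⊢
        refine ⟨hmem.1, ⟨by positivity, le_trans ?_ hmem.2.2⟩⟩
        have : (m:ℝ) ≤ ((m+1 : ℕ) : ℝ) := by push_cast; linarith
        nlinarith [hpos2 n, this]
      have step : ‖g ((k:ℝ) * h, (m:ℝ) * s) - g ((k:ℝ) * h, ((m+1:ℕ):ℝ) * s)‖ ≤ δ n := by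
        refine hg n _ _ ⟨⟨k, m, rfl⟩, hmm⟩ ⟨⟨k, m+1, rfl⟩, hmem⟩ (Or.inr ⟨rfl, ?_⟩)
        show |(m:ℝ) * s - ((m+1:ℕ):ℝ) * s| = s
        push_cast
        rw [show (m:ℝ) * s - ((m:ℝ)+1) * s = -s by ring, abs_neg, abs_of_pos (hpos2 n)]
      calc ‖g ((k:ℝ) * h, (l₁:ℝ) * s) - g ((k:ℝ) * h, ((m+1:ℕ):ℝ) * s)‖
          ≤ ‖g ((k:ℝ) * h, (l₁:ℝ) * s) - g ((k:ℝ) * h, (m:ℝ) * s)‖ +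
            ‖g ((k:ℝ) * h, (m:ℝ) * s) - g ((k:ℝ) * h, ((m+1:ℕ):ℝ) * s)‖ :=
            norm_sub_le_norm_sub_add_norm_sub _ _ _
        _ ≤ ((m - l₁ : ℕ) : ℝ) * δ n + δ n := add_le_add (ih l₁ hl' hmm) step
        _ ≤ ((m + 1 - l₁ : ℕ) : ℝ) * δ n := by
            rw [Nat.cast_sub hl', Nat.cast_sub (by omega)]
            push_cast; nlinarith [hδ n]


lemma path_both (hδ : ∀ n, 0 ≤ δ n) (hR₁ : R₁ = Set.Icc 0 a ×ˢ Set.Icc 0 b)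
    (hg : ∀ n : ℕ, ∀ p q : ℝ × ℝ, p ∈ grid n ∩ R₁ → q ∈ grid n ∩ R₁ → IsNN n p q →
      ‖g p - g q‖ ≤ δ n)
    (n k₁ k₂ l₁ l₂ ck cl : ℕ) (hk1 : k₁ ≤ k₂ + ck) (hk2 : k₂ ≤ k₁ + ck)
    (hl1 : l₁ ≤ l₂ + cl) (hl2 : l₂ ≤ l₁ + cl)
    (h1 : ((k₁ : ℝ) * 2 ^ (-(4 * n : ℤ)), (l₁ : ℝ) * 2 ^ (-(2 * n : ℤ))) ∈ R₁)
    (h2 : ((k₂ : ℝ) * 2 ^ (-(4 * n : ℤ)), (l₂ : ℝ) * 2 ^ (-(2 * n : ℤ))) ∈ R₁) :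
    ‖g ((k₁ : ℝ) * 2 ^ (-(4 * n : ℤ)), (l₁ : ℝ) * 2 ^ (-(2 * n : ℤ))) -
      g ((k₂ : ℝ) * 2 ^ (-(4 * n : ℤ)), (l₂ : ℝ) * 2 ^ (-(2 * n : ℤ)))‖ ≤ ((ck : ℝ) + cl) * δ n := by
  set h : ℝ := 2 ^ (-(4 * n : ℤ)) with hh
  set s : ℝ := 2 ^ (-(2 * n : ℤ)) with hs
  have hmid : ((k₂ : ℝ) * h, (l₁ : ℝ) * s) ∈ R₁ := by
    rw [memR hR₁] at h1 h2 ⊢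
    exact ⟨h2.1, h1.2⟩
  have hstep1 : ‖g ((k₁:ℝ) * h, (l₁:ℝ) * s) - g ((k₂:ℝ) * h, (l₁:ℝ) * s)‖ ≤ (ck : ℝ) * δ n := by
    rcases le_total k₁ k₂ with hle | hle
    · refine le_trans (path_t hδ hR₁ hg n l₁ k₂ k₁ hle hmid) ?_
      have : ((k₂ - k₁ : ℕ) : ℝ) ≤ (ck : ℝ) := by
        have : k₂ - k₁ ≤ ck := by omega
        exact_mod_cast this
      exact mul_le_mul_of_nonneg_right this (hδ n)
    · rw [norm_sub_rev]
      refine le_trans (path_t hδ hR₁ hg n l₁ k₁ k₂ hle (by rw [memR hR₁] at h1 hmid ⊢; exact ⟨h1.1, hmid.2⟩)) ?_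
      have : ((k₁ - k₂ : ℕ) : ℝ) ≤ (ck : ℝ) := by
        have : k₁ - k₂ ≤ ck := by omega
        exact_mod_cast this
      exact mul_le_mul_of_nonneg_right this (hδ n)
  have hstep2 : ‖g ((k₂:ℝ) * h, (l₁:ℝ) * s) - g ((k₂:ℝ) * h, (l₂:ℝ) * s)‖ ≤ (cl : ℝ) * δ n := by
    rcases le_total l₁ l₂ with hle | hle
    · refine le_trans (path_x hδ hR₁ hg n k₂ l₂ l₁ hle h2) ?_
      have : ((l₂ - l₁ : ℕ) : ℝ) ≤ (cl : ℝ) := by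
        have : l₂ - l₁ ≤ cl := by omega
        exact_mod_cast this
      exact mul_le_mul_of_nonneg_right this (hδ n)
    · rw [norm_sub_rev]
      refine le_trans (path_x hδ hR₁ hg n k₂ l₁ l₂ hle hmid) ?_
      have : ((l₁ - l₂ : ℕ) : ℝ) ≤ (cl : ℝ) := by
        have : l₁ - l₂ ≤ cl := by omega
        exact_mod_cast this
      exact mul_le_mul_of_nonneg_right this (hδ n)
  calc ‖g ((k₁:ℝ) * h, (l₁:ℝ) * s) - g ((k₂:ℝ) * h, (l₂:ℝ) * s)‖
      ≤ ‖g ((k₁:ℝ) * h, (l₁:ℝ) * s) - g ((k₂:ℝ) * h, (l₁:ℝ) * s)‖ +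
        ‖g ((k₂:ℝ) * h, (l₁:ℝ) * s) - g ((k₂:ℝ) * h, (l₂:ℝ) * s)‖ :=
        norm_sub_le_norm_sub_add_norm_sub _ _ _
    _ ≤ (ck : ℝ) * δ n + (cl : ℝ) * δ n := add_le_add hstep1 hstep2
    _ = ((ck : ℝ) + cl) * δ n := by ring

end Aux

open scoped ENNReal in
theorem chaining_bound (d : ℕ) (a b : ℝ) (ha : a ∈ Set.Icc (0:ℝ) 1) (hb : b ∈ Set.Icc (0:ℝ) 1)
    (δ : ℕ → ℝ) (hδ : ∀ n, 0 ≤ δ n)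
    (g : ℝ × ℝ → EuclideanSpace ℝ (Fin d))
    (R₁ : Set (ℝ × ℝ)) (hR₁ : R₁ = Set.Icc 0 a ×ˢ Set.Icc 0 b)
    (hg : ∀ n : ℕ, ∀ p q : ℝ × ℝ, p ∈ grid n ∩ R₁ → q ∈ grid n ∩ R₁ → IsNN n p q →
      ‖g p - g q‖ ≤ δ n) :
    ∀ p q : ℝ × ℝ, p ∈ (⋃ n, grid n) ∩ R₁ → q ∈ (⋃ n, grid n) ∩ R₁ →
      (‖g p - g q‖₊ : ℝ≥0∞) ≤
        40 * ∑' n : ℕ, ENNReal.ofReal (δ (⌊Real.logb 2 (1 / Delta (p - q))⌋₊ + n)) := by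
  intro p q hp hq
  obtain ⟨hpU, hpR⟩ := hp
  obtain ⟨hqU, hqR⟩ := hq
  simp only [Set.mem_iUnion] at hpU hqU
  obtain ⟨m, kp, lp, hpm⟩ := hpU
  obtain ⟨m', kq, lq, hqm⟩ := hqU
  by_cases hpq : p = q
  · simp [hpq]
  -- coordinate bounds
  have hpc : (0 ≤ p.1 ∧ p.1 ≤ a) ∧ (0 ≤ p.2 ∧ p.2 ≤ b) := (memR hR₁ p.1 p.2).1 hpR
  have hqc : (0 ≤ q.1 ∧ q.1 ≤ a) ∧ (0 ≤ q.2 ∧ q.2 ≤ b) := (memR hR₁ q.1 q.2).1 hqR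
  set n₀ := ⌊Real.logb 2 (1 / Delta (p - q))⌋₊ with hn₀
  -- Delta positivity and ≤ 1
  have hD0 : 0 < Delta (p - q) := by
    rcases (Prod.ext_iff.not.1 hpq : ¬(p.1 = q.1 ∧ p.2 = q.2)) with h
    rw [Decidable.not_and_iff_or_not] at h
    rcases h with h1 | h2
    · have : 0 < |(p - q).1| := by simp [abs_pos, sub_ne_zero, h1]
      exact lt_of_lt_of_le (Real.rpow_pos_of_pos this _) (le_max_left _ _)
    · have : 0 < |(p - q).2| := by simp [abs_pos, sub_ne_zero, h2]
      exact lt_of_lt_of_le (Real.rpow_pos_of_pos this _) (le_max_right _ _)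
  have habs1 : |p.1 - q.1| ≤ 1 := by
    rw [abs_le]; constructor <;> nlinarith [ha.1, ha.2, hpc.1.1, hpc.1.2, hqc.1.1, hqc.1.2]
  have habs2 : |p.2 - q.2| ≤ 1 := by
    rw [abs_le]; constructor <;> nlinarith [hb.1, hb.2, hpc.2.1, hpc.2.2, hqc.2.1, hqc.2.2]
  have hD1 : Delta (p - q) ≤ 1 := by
    apply max_le
    · exact Real.rpow_le_one (abs_nonneg _) (by simpa using habs1) (by norm_num)
    · exact Real.rpow_le_one (abs_nonneg _) (by simpa using habs2) (by norm_num)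
  -- n₀ bound : Delta (p-q) ≤ 2^(-n₀)
  have hDle : Delta (p - q) ≤ 2 ^ (-(n₀:ℤ)) := by
    have hlognn : 0 ≤ Real.logb 2 (1 / Delta (p - q)) := by
      apply Real.logb_nonneg (by norm_num)
      rw [le_div_iff₀ hD0]; linarith
    have h1 : (n₀ : ℝ) ≤ Real.logb 2 (1 / Delta (p - q)) := Nat.floor_le hlognn
    have h2 : (2:ℝ) ^ ((n₀:ℕ):ℝ) ≤ (2:ℝ) ^ Real.logb 2 (1 / Delta (p - q)) :=
      Real.rpow_le_rpow_of_exponent_le one_le_two h1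
    rw [Real.rpow_natCast, Real.rpow_logb (by norm_num) (by norm_num) (by positivity)] at h2
    have h3 : Delta (p - q) * 2 ^ (n₀:ℕ) ≤ 1 := by
      rw [le_div_iff₀ hD0] at h2
      nlinarith
    rw [zpow_neg, zpow_natCast]
    have h4 : Delta (p - q) ≤ 1 / 2 ^ (n₀:ℕ) := (le_div_iff₀ (by positivity)).2 h3
    simpa [one_div] using h4
  -- coordinate distance bounds
  have hmax1 : |p.1 - q.1| ^ ((1:ℝ)/4) ≤ Delta (p - q) := le_max_left _ _
  have hmax2 : |p.2 - q.2| ^ ((1:ℝ)/2) ≤ Delta (p - q) := le_max_right _ _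
  have hd1 : |p.1 - q.1| ≤ 2 ^ (-(4*(n₀:ℕ):ℤ)) := by
    have h := quarter_pow (p.1 - q.1) (2 ^ (-(n₀:ℤ))) (by positivity) (le_trans hmax1 hDle)
    rwa [zpow_collect n₀ 4] at h
  have hd2 : |p.2 - q.2| ≤ 2 ^ (-(2*(n₀:ℕ):ℤ)) := by
    have h := half_pow (p.2 - q.2) (2 ^ (-(n₀:ℤ))) (by positivity) (le_trans hmax2 hDle)
    rwa [zpow_collect n₀ 2] at h
  -- projections
  set P : ℕ → ℝ × ℝ := fun n =>
    (((⌊p.1 * 2^(4*n)⌋₊:ℕ):ℝ) * 2^(-(4*(n:ℕ):ℤ)), ((⌊p.2 * 2^(2*n)⌋₊:ℕ):ℝ) * 2^(-(2*(n:ℕ):ℤ)))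
    with hP
  set Q : ℕ → ℝ × ℝ := fun n =>
    (((⌊q.1 * 2^(4*n)⌋₊:ℕ):ℝ) * 2^(-(4*(n:ℕ):ℤ)), ((⌊q.2 * 2^(2*n)⌋₊:ℕ):ℝ) * 2^(-(2*(n:ℕ):ℤ)))
    with hQ
  have hPmem : ∀ n, P n ∈ R₁ := by
    intro n; simp only [hP]; rw [memR hR₁]
    exact ⟨⟨by positivity, le_trans (proj_le4 p.1 hpc.1.1 n) hpc.1.2⟩,
      ⟨by positivity, le_trans (proj_le2 p.2 hpc.2.1 n) hpc.2.2⟩⟩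
  have hQmem : ∀ n, Q n ∈ R₁ := by
    intro n; simp only [hQ]; rw [memR hR₁]
    exact ⟨⟨by positivity, le_trans (proj_le4 q.1 hqc.1.1 n) hqc.1.2⟩,
      ⟨by positivity, le_trans (proj_le2 q.2 hqc.2.1 n) hqc.2.2⟩⟩
  -- base estimate
  have base : ‖g (P n₀) - g (Q n₀)‖ ≤ 2 * δ n₀ := by
    have hab1 := abs_le.1 hd1
    have hab2 := abs_le.1 hd2
    have h := path_both hδ hR₁ hg n₀ (⌊p.1 * 2^(4*n₀)⌋₊) (⌊q.1 * 2^(4*n₀)⌋₊)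
      (⌊p.2 * 2^(2*n₀)⌋₊) (⌊q.2 * 2^(2*n₀)⌋₊) 1 1
      (close4 p.1 q.1 hpc.1.1 hqc.1.1 n₀ (by linarith [hab1.2]))
      (close4 q.1 p.1 hqc.1.1 hpc.1.1 n₀ (by linarith [hab1.1]))
      (close2 p.2 q.2 hpc.2.1 hqc.2.1 n₀ (by linarith [hab2.2]))
      (close2 q.2 p.2 hqc.2.1 hpc.2.1 n₀ (by linarith [hab2.1]))
      (by simpa only [hP] using hPmem n₀) (by simpa only [hQ] using hQmem n₀)
    rw [show ((1:ℕ):ℝ) + ((1:ℕ):ℝ) = 2 from by norm_num] at h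
    simp only [hP, hQ]
    exact h
  -- step estimates
  have stepP : ∀ n, ‖g (P (n+1)) - g (P n)‖ ≤ 18 * δ (n+1) := by
    intro n
    have e4 := pt_eq4 n (⌊p.1 * 2^(4*n)⌋₊)
    have e2 := pt_eq2 n (⌊p.2 * 2^(2*n)⌋₊)
    have hmem2 : (((16 * ⌊p.1 * 2^(4*n)⌋₊ : ℕ):ℝ) * 2^(-(4*((n+1:ℕ)):ℤ)),
        ((4 * ⌊p.2 * 2^(2*n)⌋₊ : ℕ):ℝ) * 2^(-(2*((n+1:ℕ)):ℤ))) ∈ R₁ := by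
      rw [← e4, ← e2]; simpa only [hP] using hPmem n
    have h := path_both hδ hR₁ hg (n+1) (⌊p.1 * 2^(4*(n+1))⌋₊) (16 * ⌊p.1 * 2^(4*n)⌋₊)
      (⌊p.2 * 2^(2*(n+1))⌋₊) (4 * ⌊p.2 * 2^(2*n)⌋₊) 15 3
      (by have := step_ub4 p.1 hpc.1.1 n; omega)
      (by have := step_lb4 p.1 hpc.1.1 n; omega)
      (by have := step_ub2 p.2 hpc.2.1 n; omega)
      (by have := step_lb2 p.2 hpc.2.1 n; omega)
      (by simpa only [hP] using hPmem (n+1)) hmem2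
    rw [← e4, ← e2, show ((15:ℕ):ℝ) + ((3:ℕ):ℝ) = 18 from by norm_num] at h
    simp only [hP]
    exact h
  have stepQ : ∀ n, ‖g (Q (n+1)) - g (Q n)‖ ≤ 18 * δ (n+1) := by
    intro n
    have e4 := pt_eq4 n (⌊q.1 * 2^(4*n)⌋₊)
    have e2 := pt_eq2 n (⌊q.2 * 2^(2*n)⌋₊)
    have hmem2 : (((16 * ⌊q.1 * 2^(4*n)⌋₊ : ℕ):ℝ) * 2^(-(4*((n+1:ℕ)):ℤ)),
        ((4 * ⌊q.2 * 2^(2*n)⌋₊ : ℕ):ℝ) * 2^(-(2*((n+1:ℕ)):ℤ))) ∈ R₁ := by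
      rw [← e4, ← e2]; simpa only [hQ] using hQmem n
    have h := path_both hδ hR₁ hg (n+1) (⌊q.1 * 2^(4*(n+1))⌋₊) (16 * ⌊q.1 * 2^(4*n)⌋₊)
      (⌊q.2 * 2^(2*(n+1))⌋₊) (4 * ⌊q.2 * 2^(2*n)⌋₊) 15 3
      (by have := step_ub4 q.1 hqc.1.1 n; omega)
      (by have := step_lb4 q.1 hqc.1.1 n; omega)
      (by have := step_ub2 q.2 hqc.2.1 n; omega)
      (by have := step_lb2 q.2 hqc.2.1 n; omega)
      (by simpa only [hQ] using hQmem (n+1)) hmem2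
    rw [← e4, ← e2, show ((15:ℕ):ℝ) + ((3:ℕ):ℝ) = 18 from by norm_num] at h
    simp only [hQ]
    exact h
  -- chaining induction
  have main : ∀ N, n₀ ≤ N → ‖g (P N) - g (Q N)‖ ≤
      2 * δ n₀ + ∑ j ∈ Finset.range (N - n₀), 36 * δ (n₀ + 1 + j) := by
    intro N hN
    induction N, hN using Nat.le_induction with
    | base => simpa using base
    | succ N hN ih =>
      have a1 := norm_sub_le_norm_sub_add_norm_sub (g (P (N+1))) (g (P N)) (g (Q (N+1)))
      have a2 := norm_sub_le_norm_sub_add_norm_sub (g (P N)) (g (Q N)) (g (Q (N+1)))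
      have t2 : ‖g (Q N) - g (Q (N+1))‖ ≤ 18 * δ (N+1) := by
        rw [norm_sub_rev]; exact stepQ N
      have hsum : ∑ j ∈ Finset.range (N + 1 - n₀), 36 * δ (n₀ + 1 + j)
          = ∑ j ∈ Finset.range (N - n₀), 36 * δ (n₀ + 1 + j) + 36 * δ (N + 1) := by
        rw [show N + 1 - n₀ = (N - n₀) + 1 from by omega, Finset.sum_range_succ,
          show n₀ + 1 + (N - n₀) = N + 1 from by omega]
      rw [hsum]
      have t1 := stepP N
      linarith
  -- endpoint identification
  set N := max (max m m') n₀ with hNdef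
  have hmN : m ≤ N := le_trans (le_max_left _ _) (le_max_left _ _)
  have hm'N : m' ≤ N := le_trans (le_max_right _ _) (le_max_left _ _)
  have hn₀N : n₀ ≤ N := le_max_right _ _
  have hp1m : p.1 = (kp:ℝ) * 2^(-(4*(m:ℕ):ℤ)) := by rw [hpm]
  have hp2m : p.2 = (lp:ℝ) * 2^(-(2*(m:ℕ):ℤ)) := by rw [hpm]
  have hq1m : q.1 = (kq:ℝ) * 2^(-(4*(m':ℕ):ℤ)) := by rw [hqm]
  have hq2m : q.2 = (lq:ℝ) * 2^(-(2*(m':ℕ):ℤ)) := by rw [hqm]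
  have hPN : P N = p := by
    simp only [hP]
    exact Prod.ext_iff.2 ⟨exact_proj4 p.1 kp m N hp1m hmN, exact_proj2 p.2 lp m N hp2m hmN⟩
  have hQN : Q N = q := by
    simp only [hQ]
    exact Prod.ext_iff.2 ⟨exact_proj4 q.1 kq m' N hq1m hm'N, exact_proj2 q.2 lq m' N hq2m hm'N⟩
  have hreal := main N hn₀N
  rw [hPN, hQN] at hreal
  have hreal2 : ‖g p - g q‖ ≤ ∑ j ∈ Finset.range (N - n₀ + 1), 40 * δ (n₀ + j) := by
    rw [Finset.sum_range_succ']
    have hterm : ∑ j ∈ Finset.range (N - n₀), 36 * δ (n₀ + 1 + j)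
        ≤ ∑ j ∈ Finset.range (N - n₀), 40 * δ (n₀ + (j + 1)) := by
      apply Finset.sum_le_sum
      intro i _
      rw [show n₀ + (i + 1) = n₀ + 1 + i from by omega]
      linarith [hδ (n₀ + 1 + i)]
    have h0 : 2 * δ n₀ ≤ 40 * δ (n₀ + 0) := by
      simp only [Nat.add_zero]; linarith [hδ n₀]
    linarith
  calc (‖g p - g q‖₊ : ℝ≥0∞) = ENNReal.ofReal ‖g p - g q‖ := (ofReal_norm _).symm
    _ ≤ ENNReal.ofReal (∑ j ∈ Finset.range (N - n₀ + 1), 40 * δ (n₀ + j)) :=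
        ENNReal.ofReal_le_ofReal hreal2
    _ = ∑ j ∈ Finset.range (N - n₀ + 1), ENNReal.ofReal (40 * δ (n₀ + j)) :=
        ENNReal.ofReal_sum_of_nonneg (fun i _ => mul_nonneg (by norm_num) (hδ (n₀ + i)))
    _ = ∑ j ∈ Finset.range (N - n₀ + 1), 40 * ENNReal.ofReal (δ (n₀ + j)) := by
        refine Finset.sum_congr rfl fun i _ => ?_
        rw [ENNReal.ofReal_mul (by norm_num : (0:ℝ) ≤ 40)]
        norm_num
    _ = 40 * ∑ j ∈ Finset.range (N - n₀ + 1), ENNReal.ofReal (δ (n₀ + j)) := by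
        rw [Finset.mul_sum]
    _ ≤ 40 * ∑' n : ℕ, ENNReal.ofReal (δ (n₀ + n)) := by
        gcongr
        exact ENNReal.sum_le_tsum _
end

section
/- Path construction lemma: Let R₁ = [0,a] × [0,b] with a,b ∈ [0,1], with the grids 𝒢ₙ = {(k·2^{-4n}, ℓ·2^{-2n}) : k,ℓ ∈ ℕ} and 𝒢 = ∪ₙ 𝒢ₙ. Given p¹, p² ∈ 𝒢 ∩ R₁, let n₀ be the integer part of log₂(1/Δ(p¹ - p²)). Then p¹ and p² can be joined by a path of line segments, each segment joining nearest neighbors in 𝒢ₙ for some n ≥ n₀, such that for each n ≥ n₀ there are at most 40 segments of type n in the path. -/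
namespace PathAux

noncomputable def s4 (n : ℕ) : ℝ := 2 ^ (-(4 * n : ℤ))
noncomputable def s2 (n : ℕ) : ℝ := 2 ^ (-(2 * n : ℤ))

lemma s4_pos (n : ℕ) : 0 < s4 n := zpow_pos (by norm_num) _
lemma s2_pos (n : ℕ) : 0 < s2 n := zpow_pos (by norm_num) _

lemma s4_succ (n : ℕ) : (16 : ℝ) * s4 (n + 1) = s4 n := by
  unfold s4
  push_cast
  rw [show (-(4 * ((n:ℤ) + 1))) = (-(4 * n : ℤ)) + (-4) by ring, zpow_add₀ (by norm_num : (2:ℝ) ≠ 0)]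
  norm_num
  ring

lemma s2_succ (n : ℕ) : (4 : ℝ) * s2 (n + 1) = s2 n := by
  unfold s2
  push_cast
  rw [show (-(2 * ((n:ℤ) + 1))) = (-(2 * n : ℤ)) + (-2) by ring, zpow_add₀ (by norm_num : (2:ℝ) ≠ 0)]
  norm_num
  ring

lemma s4_pow (t m : ℕ) : ((16 : ℝ) ^ m) * s4 (t + m) = s4 t := by
  induction m with
  | zero => simp
  | succ m ih =>
    rw [show t + (m+1) = (t+m)+1 by ring, pow_succ, mul_assoc, s4_succ, ih]

lemma s2_pow (t m : ℕ) : ((4 : ℝ) ^ m) * s2 (t + m) = s2 t := by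
  induction m with
  | zero => simp
  | succ m ih =>
    rw [show t + (m+1) = (t+m)+1 by ring, pow_succ, mul_assoc, s2_succ, ih]

/-- Joinable with per-type budget. -/
inductive J (n₀ : ℕ) (S : Set (ℝ × ℝ)) : ℝ × ℝ → ℝ × ℝ → (ℕ → ℕ) → Prop
  | refl (p : ℝ × ℝ) (c : ℕ → ℕ) : J n₀ S p p c
  | snoc {p r q : ℝ × ℝ} {c c' : ℕ → ℕ} {k : ℕ} :
      J n₀ S p r c → r ∈ S → q ∈ S → n₀ ≤ k → IsNN k r q →
      (∀ m, c m + (if m = k then 1 else 0) ≤ c' m) → J n₀ S p q c'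

lemma J.mono {n₀ S p q c c'} (h : J n₀ S p q c) (hle : ∀ m, c m ≤ c' m) :
    J n₀ S p q c' := by
  induction h with
  | refl => exact J.refl _ _
  | snoc h hr hq hk hNN hb ih =>
    exact J.snoc ‹_› hr hq hk hNN (fun m => le_trans (hb m) (hle m))

lemma J.trans {n₀ S p r q c₁ c₂} (h1 : J n₀ S p r c₁) (h2 : J n₀ S r q c₂) :
    J n₀ S p q (fun m => c₁ m + c₂ m) := by
  induction h2 with
  | refl => exact h1.mono (fun m => Nat.le_add_right _ _)
  | snoc h hr hq hk hNN hb ih =>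
    exact J.snoc ih hr hq hk hNN (fun m => by
      have := hb m; omega)

lemma J.single {n₀ S} {p q : ℝ × ℝ} {k : ℕ} (hp : p ∈ S) (hq : q ∈ S) (hk : n₀ ≤ k)
    (hNN : IsNN k p q) : J n₀ S p q (fun m => if m = k then 1 else 0) :=
  J.snoc (J.refl p (fun _ => 0)) hp hq hk hNN (fun m => by simp)

lemma IsNN.symm {k : ℕ} {p q : ℝ × ℝ} (h : IsNN k p q) : IsNN k q p := by
  unfold IsNN at *
  rcases h with ⟨h1, h2⟩ | ⟨h1, h2⟩
  · exact Or.inl ⟨by rwa [abs_sub_comm], h2.symm⟩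
  · exact Or.inr ⟨h1.symm, by rwa [abs_sub_comm]⟩

lemma J.symm {n₀ S p q c} (h : J n₀ S p q c) : J n₀ S q p c := by
  induction h with
  | refl => exact J.refl _ _
  | snoc h hr hq hk hNN hb ih =>
    exact ((J.single hq hr hk (IsNN.symm hNN)).trans ih).mono (fun m => by have := hb m; omega)

lemma J.toPath {n₀ S p q c} (h : J n₀ S p q c) :
    ∃ (m : ℕ) (path : ℕ → ℝ × ℝ) (typ : ℕ → ℕ),
      path 0 = p ∧ path m = q ∧
      (∀ i < m, n₀ ≤ typ i ∧ path i ∈ S ∧ path (i + 1) ∈ S ∧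
        IsNN (typ i) (path i) (path (i + 1))) ∧
      (∀ n : ℕ, ((Finset.range m).filter (fun i => typ i = n)).card ≤ c n) := by
  induction h with
  | refl =>
    exact ⟨0, fun _ => _, fun _ => 0, rfl, rfl, by omega, by simp⟩
  | snoc h hr hq hk hNN hb ih =>
    rename_i rmid rend cin cbud k
    obtain ⟨m, path, typ, h0, hm, hseg, hcard⟩ := ih
    refine ⟨m + 1, fun i => if i < m + 1 then path i else rend,
      fun i => if i < m then typ i else k, by simp [h0], by simp, ?_, ?_⟩
    · intro i hi
      rcases Nat.lt_or_ge i m with hlt | hge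
      · have h1 : i < m + 1 := by omega
        have h2 : i + 1 < m + 1 := by omega
        simp only [if_pos h1, if_pos h2, if_pos hlt]
        obtain ⟨a1, a2, a3, a4⟩ := hseg i hlt
        exact ⟨a1, a2, a3, a4⟩
      · have hi' : i = m := by omega
        subst hi'
        refine ⟨?_, ?_, ?_, ?_⟩ <;>
          simp only [lt_self_iff_false, if_false, Nat.lt_succ_self, if_true, if_pos (Nat.lt_succ_self _), hm] <;>
          first
            | exact hk
            | exact hr
            | exact hq
            | exact hNN
    · intro n
      have hfc : (Finset.range m).filter (fun i => (if i < m then typ i else k) = n)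
          = (Finset.range m).filter (fun i => typ i = n) := by
        apply Finset.filter_congr
        intro i hi
        simp only [Finset.mem_range] at hi
        simp [hi]
      rw [Finset.range_add_one, Finset.filter_insert]
      have h1 := hb n
      have h2 := hcard n
      by_cases hkn : k = n
      · rw [if_pos (by simp [hkn])]
        refine le_trans (Finset.card_insert_le _ _) ?_
        rw [hfc]
        rw [if_pos hkn.symm] at h1
        omega
      · rw [if_neg (by simp [hkn])]
        rw [hfc]
        rw [if_neg (Ne.symm hkn)] at h1
        omega


lemma s4_eq (n : ℕ) : s4 n = ((2:ℝ) ^ (4 * n))⁻¹ := by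
  unfold s4
  rw [show (-(4 * n : ℤ)) = -((4 * n : ℕ) : ℤ) by push_cast; ring, zpow_neg, zpow_natCast]

lemma s2_eq (n : ℕ) : s2 n = ((2:ℝ) ^ (2 * n))⁻¹ := by
  unfold s2
  rw [show (-(2 * n : ℤ)) = -((2 * n : ℕ) : ℤ) by push_cast; ring, zpow_neg, zpow_natCast]

lemma Jh {n₀ : ℕ} {S : Set (ℝ × ℝ)} (n : ℕ) (hn : n₀ ≤ n) (y : ℝ) (k k' : ℕ) (hkk : k ≤ k')
    (hS : ∀ j : ℕ, k ≤ j → j ≤ k' → ((j : ℝ) * s4 n, y) ∈ S) :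
    J n₀ S ((k : ℝ) * s4 n, y) ((k' : ℝ) * s4 n, y) (fun m => if m = n then k' - k else 0) := by
  induction k', hkk using Nat.le_induction with
  | base => exact J.refl _ _
  | succ k' hkk ih =>
    refine J.snoc (ih (fun j h1 h2 => hS j h1 (by omega))) (hS k' hkk (by omega))
      (hS (k'+1) (by omega) le_rfl) hn ?_ ?_
    · left
      refine ⟨?_, rfl⟩
      show |(k':ℝ) * s4 n - ((k'+1:ℕ):ℝ) * s4 n| = _
      push_cast
      rw [show (k':ℝ) * s4 n - ((k':ℝ)+1) * s4 n = -(s4 n) by ring, abs_neg,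
        abs_of_pos (s4_pos n)]
      rfl
    · intro m
      by_cases hm : m = n <;> simp [hm] <;> omega

lemma Jv {n₀ : ℕ} {S : Set (ℝ × ℝ)} (n : ℕ) (hn : n₀ ≤ n) (x : ℝ) (l l' : ℕ) (hll : l ≤ l')
    (hS : ∀ j : ℕ, l ≤ j → j ≤ l' → (x, (j : ℝ) * s2 n) ∈ S) :
    J n₀ S (x, (l : ℝ) * s2 n) (x, (l' : ℝ) * s2 n) (fun m => if m = n then l' - l else 0) := by
  induction l', hll using Nat.le_induction with
  | base => exact J.refl _ _
  | succ l' hll ih =>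
    refine J.snoc (ih (fun j h1 h2 => hS j h1 (by omega))) (hS l' hll (by omega))
      (hS (l'+1) (by omega) le_rfl) hn ?_ ?_
    · right
      refine ⟨rfl, ?_⟩
      show |(l':ℝ) * s2 n - ((l'+1:ℕ):ℝ) * s2 n| = _
      push_cast
      rw [show (l':ℝ) * s2 n - ((l':ℝ)+1) * s2 n = -(s2 n) by ring, abs_neg,
        abs_of_pos (s2_pos n)]
      rfl
    · intro m
      by_cases hm : m = n <;> simp [hm] <;> omega

/-- The ambient set. -/
def SS (a b : ℝ) : Set (ℝ × ℝ) := (⋃ n, grid n) ∩ (Set.Icc 0 a ×ˢ Set.Icc 0 b)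

lemma mem_SS {a b : ℝ} (n k l : ℕ) (hx : (k : ℝ) * s4 n ≤ a) (hy : (l : ℝ) * s2 n ≤ b) :
    ((k : ℝ) * s4 n, (l : ℝ) * s2 n) ∈ SS a b := by
  constructor
  · exact Set.mem_iUnion.2 ⟨n, ⟨k, l, rfl⟩⟩
  · exact ⟨⟨mul_nonneg (Nat.cast_nonneg k) (s4_pos n).le, hx⟩,
      ⟨mul_nonneg (Nat.cast_nonneg l) (s2_pos n).le, hy⟩⟩


lemma step_eq4 (k t : ℕ) : (k : ℝ) * s4 t = ((16 * k : ℕ) : ℝ) * s4 (t + 1) := by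
  push_cast; rw [← s4_succ t]; ring

lemma step_eq2 (l t : ℕ) : (l : ℝ) * s2 t = ((4 * l : ℕ) : ℝ) * s2 (t + 1) := by
  push_cast; rw [← s2_succ t]; ring

lemma val_le4 {kN N : ℕ} (t : ℕ) (ht : t ≤ N) :
    ((kN / 16 ^ (N - t) : ℕ) : ℝ) * s4 t ≤ (kN : ℝ) * s4 N := by
  have h1 : (kN / 16 ^ (N - t)) * 16 ^ (N - t) ≤ kN := Nat.div_mul_le_self _ _
  have h2 : s4 t = 16 ^ (N - t) * s4 (t + (N - t)) := (s4_pow t (N - t)).symm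
  rw [show t + (N - t) = N by omega] at h2
  calc ((kN / 16 ^ (N - t) : ℕ) : ℝ) * s4 t
      = (((kN / 16 ^ (N - t)) * 16 ^ (N - t) : ℕ) : ℝ) * s4 N := by
        rw [h2]; push_cast; ring
    _ ≤ (kN : ℝ) * s4 N :=
        mul_le_mul_of_nonneg_right (by exact_mod_cast h1) (s4_pos N).le

lemma val_le2 {lN N : ℕ} (t : ℕ) (ht : t ≤ N) :
    ((lN / 4 ^ (N - t) : ℕ) : ℝ) * s2 t ≤ (lN : ℝ) * s2 N := by
  have h1 : (lN / 4 ^ (N - t)) * 4 ^ (N - t) ≤ lN := Nat.div_mul_le_self _ _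
  have h2 : s2 t = 4 ^ (N - t) * s2 (t + (N - t)) := (s2_pow t (N - t)).symm
  rw [show t + (N - t) = N by omega] at h2
  calc ((lN / 4 ^ (N - t) : ℕ) : ℝ) * s2 t
      = (((lN / 4 ^ (N - t)) * 4 ^ (N - t) : ℕ) : ℝ) * s2 N := by
        rw [h2]; push_cast; ring
    _ ≤ (lN : ℝ) * s2 N :=
        mul_le_mul_of_nonneg_right (by exact_mod_cast h1) (s2_pos N).le

lemma div_step4 (kN N t : ℕ) (h : t < N) :
    kN / 16 ^ (N - t) = (kN / 16 ^ (N - (t + 1))) / 16 := by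
  rw [Nat.div_div_eq_div_mul, ← pow_succ, show N - (t + 1) + 1 = N - t by omega]

lemma div_step2 (lN N t : ℕ) (h : t < N) :
    lN / 4 ^ (N - t) = (lN / 4 ^ (N - (t + 1))) / 4 := by
  rw [Nat.div_div_eq_div_mul, ← pow_succ, show N - (t + 1) + 1 = N - t by omega]

lemma Jrefine (a b : ℝ) (n₀ N kN lN : ℕ) (hx : (kN : ℝ) * s4 N ≤ a)
    (hy : (lN : ℝ) * s2 N ≤ b) :
    ∀ d t, t + d = N → n₀ ≤ t →
    J n₀ (SS a b)
      (((kN / 16 ^ (N - t) : ℕ) : ℝ) * s4 t, ((lN / 4 ^ (N - t) : ℕ) : ℝ) * s2 t)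
      ((kN : ℝ) * s4 N, (lN : ℝ) * s2 N)
      (fun m => if t < m ∧ m ≤ N then 18 else 0) := by
  intro d
  induction d with
  | zero =>
    intro t htN hn
    have ht : t = N := by omega
    subst ht
    simp only [Nat.sub_self, pow_zero, Nat.div_one]
    exact J.refl _ _
  | succ d ih =>
    intro t htN hn
    have htN' : t < N := by omega
    set kt := kN / 16 ^ (N - t) with hkt
    set kt1 := kN / 16 ^ (N - (t + 1)) with hkt1
    set lt := lN / 4 ^ (N - t) with hlt
    set lt1 := lN / 4 ^ (N - (t + 1)) with hlt1
    have hdk : kt = kt1 / 16 := div_step4 kN N t htN'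
    have hdl : lt = lt1 / 4 := div_step2 lN N t htN'
    have hk_low : 16 * kt ≤ kt1 := by omega
    have hk_high : kt1 ≤ 16 * kt + 15 := by omega
    have hl_low : 4 * lt ≤ lt1 := by omega
    have hl_high : lt1 ≤ 4 * lt + 3 := by omega
    have hxt1 : (kt1 : ℝ) * s4 (t + 1) ≤ a := le_trans (val_le4 (t + 1) (by omega)) hx
    have hyt1 : (lt1 : ℝ) * s2 (t + 1) ≤ b := le_trans (val_le2 (t + 1) (by omega)) hy
    have hyt : ((4 * lt : ℕ) : ℝ) * s2 (t + 1) ≤ b := by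
      rw [← step_eq2]
      exact le_trans (val_le2 t (by omega)) hy
    -- horizontal leg
    have hH : J n₀ (SS a b)
        (((16 * kt : ℕ) : ℝ) * s4 (t + 1), ((4 * lt : ℕ) : ℝ) * s2 (t + 1))
        ((kt1 : ℝ) * s4 (t + 1), ((4 * lt : ℕ) : ℝ) * s2 (t + 1))
        (fun m => if m = t + 1 then kt1 - 16 * kt else 0) := by
      apply Jh (t + 1) (by omega) _ _ _ hk_low
      intro j hj1 hj2
      apply mem_SS (t + 1) j (4 * lt) ?_ hyt
      calc (j : ℝ) * s4 (t + 1) ≤ (kt1 : ℝ) * s4 (t + 1) :=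
            mul_le_mul_of_nonneg_right (by exact_mod_cast hj2) (s4_pos _).le
        _ ≤ a := hxt1
    -- vertical leg
    have hV : J n₀ (SS a b)
        ((kt1 : ℝ) * s4 (t + 1), ((4 * lt : ℕ) : ℝ) * s2 (t + 1))
        ((kt1 : ℝ) * s4 (t + 1), (lt1 : ℝ) * s2 (t + 1))
        (fun m => if m = t + 1 then lt1 - 4 * lt else 0) := by
      apply Jv (t + 1) (by omega) _ _ _ hl_low
      intro j hj1 hj2
      apply mem_SS (t + 1) kt1 j hxt1
      calc (j : ℝ) * s2 (t + 1) ≤ (lt1 : ℝ) * s2 (t + 1) :=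
            mul_le_mul_of_nonneg_right (by exact_mod_cast hj2) (s2_pos _).le
        _ ≤ b := hyt1
    have hIH := ih (t + 1) (by omega) (by omega)
    have hfull := (hH.trans hV).trans hIH
    rw [← step_eq4, ← step_eq2] at hfull
    apply hfull.mono
    intro m
    by_cases h1 : m = t + 1
    · subst h1
      simp only [if_pos rfl]
      have : ¬ (t + 1 < t + 1 ∧ t + 1 ≤ N) := by omega
      rw [if_neg this, if_pos (by omega : t < t + 1 ∧ t + 1 ≤ N)]
      simp only [if_true]
      omega
    · rw [if_neg h1, if_neg h1]
      by_cases h2 : t + 1 < m ∧ m ≤ N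
      · rw [if_pos h2, if_pos (by omega : t < m ∧ m ≤ N)]
      · rw [if_neg h2]
        by_cases h3 : t < m ∧ m ≤ N
        · simp
        · simp


lemma val_lt4 (kN N t : ℕ) (ht : t ≤ N) :
    (kN : ℝ) * s4 N < ((kN / 16 ^ (N - t) + 1 : ℕ) : ℝ) * s4 t := by
  have hM : 0 < 16 ^ (N - t) := by positivity
  have heq := Nat.div_add_mod kN (16 ^ (N - t))
  have hmd := Nat.mod_lt kN hM
  have h1 : kN < (kN / 16 ^ (N - t) + 1) * 16 ^ (N - t) := by
    calc kN = 16 ^ (N - t) * (kN / 16 ^ (N - t)) + kN % 16 ^ (N - t) := heq.symm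
      _ < 16 ^ (N - t) * (kN / 16 ^ (N - t)) + 16 ^ (N - t) := by omega
      _ = (kN / 16 ^ (N - t) + 1) * 16 ^ (N - t) := by ring
  have h2 : s4 t = 16 ^ (N - t) * s4 N := by
    have := s4_pow t (N - t)
    rw [show t + (N - t) = N by omega] at this
    exact this.symm
  calc (kN : ℝ) * s4 N < (((kN / 16 ^ (N - t) + 1) * 16 ^ (N - t) : ℕ) : ℝ) * s4 N := by
        apply mul_lt_mul_of_pos_right _ (s4_pos N)
        exact_mod_cast h1
    _ = ((kN / 16 ^ (N - t) + 1 : ℕ) : ℝ) * s4 t := by rw [h2]; push_cast; ring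

lemma val_lt2 (lN N t : ℕ) (ht : t ≤ N) :
    (lN : ℝ) * s2 N < ((lN / 4 ^ (N - t) + 1 : ℕ) : ℝ) * s2 t := by
  have hM : 0 < 4 ^ (N - t) := by positivity
  have heq := Nat.div_add_mod lN (4 ^ (N - t))
  have hmd := Nat.mod_lt lN hM
  have h1 : lN < (lN / 4 ^ (N - t) + 1) * 4 ^ (N - t) := by
    calc lN = 4 ^ (N - t) * (lN / 4 ^ (N - t)) + lN % 4 ^ (N - t) := heq.symm
      _ < 4 ^ (N - t) * (lN / 4 ^ (N - t)) + 4 ^ (N - t) := by omega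
      _ = (lN / 4 ^ (N - t) + 1) * 4 ^ (N - t) := by ring
  have h2 : s2 t = 4 ^ (N - t) * s2 N := by
    have := s2_pow t (N - t)
    rw [show t + (N - t) = N by omega] at this
    exact this.symm
  calc (lN : ℝ) * s2 N < (((lN / 4 ^ (N - t) + 1) * 4 ^ (N - t) : ℕ) : ℝ) * s2 N := by
        apply mul_lt_mul_of_pos_right _ (s2_pos N)
        exact_mod_cast h1
    _ = ((lN / 4 ^ (N - t) + 1 : ℕ) : ℝ) * s2 t := by rw [h2]; push_cast; ring

lemma lift4 (k n m : ℕ) (h : n ≤ m) :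
    (k : ℝ) * s4 n = ((k * 16 ^ (m - n) : ℕ) : ℝ) * s4 m := by
  have h2 : s4 n = 16 ^ (m - n) * s4 m := by
    have := s4_pow n (m - n)
    rw [show n + (m - n) = m by omega] at this
    exact this.symm
  rw [h2]; push_cast; ring

lemma lift2 (l n m : ℕ) (h : n ≤ m) :
    (l : ℝ) * s2 n = ((l * 4 ^ (m - n) : ℕ) : ℝ) * s2 m := by
  have h2 : s2 n = 4 ^ (m - n) * s2 m := by
    have := s2_pow n (m - n)
    rw [show n + (m - n) = m by omega] at this
    exact this.symm
  rw [h2]; push_cast; ring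

end PathAux

open PathAux

/-- Path construction lemma: any two points of `𝒢 ∩ R₁` can be joined by a chain of
nearest-neighbor steps, each of some type `n ≥ n₀`, with at most 40 steps of each type. -/
theorem path_construction (a b : ℝ) (ha : a ∈ Set.Icc (0:ℝ) 1) (hb : b ∈ Set.Icc (0:ℝ) 1)
    (R₁ : Set (ℝ × ℝ)) (hR₁ : R₁ = Set.Icc 0 a ×ˢ Set.Icc 0 b)
    (p q : ℝ × ℝ) (hp : p ∈ (⋃ n, grid n) ∩ R₁) (hq : q ∈ (⋃ n, grid n) ∩ R₁) :
    ∃ (m : ℕ) (path : ℕ → ℝ × ℝ) (typ : ℕ → ℕ),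
      path 0 = p ∧ path m = q ∧
      (∀ i < m, ⌊Real.logb 2 (1 / Delta (p - q))⌋₊ ≤ typ i ∧
        path i ∈ (⋃ n, grid n) ∩ R₁ ∧ path (i + 1) ∈ (⋃ n, grid n) ∩ R₁ ∧
        IsNN (typ i) (path i) (path (i + 1))) ∧
      (∀ n : ℕ, ((Finset.range m).filter (fun i => typ i = n)).card ≤ 40) := by

  subst hR₁
  classical
  by_cases hpq : p = q
  · exact ⟨0, fun _ => p, fun _ => 0, rfl, hpq, fun i hi => absurd hi (by omega), by simp⟩
  set n₀ := ⌊Real.logb 2 (1 / Delta (p - q))⌋₊ with hn₀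
  obtain ⟨hpg, hpR⟩ := hp
  obtain ⟨hqg, hqR⟩ := hq
  obtain ⟨Np', kp', lp', hpeq⟩ := Set.mem_iUnion.1 hpg
  obtain ⟨Nq', kq', lq', hqeq⟩ := Set.mem_iUnion.1 hqg
  set N := max (max Np' Nq') n₀ with hN
  have hNpN : Np' ≤ N := le_trans (le_max_left _ _) (le_max_left _ _)
  have hNqN : Nq' ≤ N := le_trans (le_max_right _ _) (le_max_left _ _)
  have hn₀N : n₀ ≤ N := le_max_right _ _
  set kP := kp' * 16 ^ (N - Np') with hkP
  set lP := lp' * 4 ^ (N - Np') with hlP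
  set kQ := kq' * 16 ^ (N - Nq') with hkQ
  set lQ := lq' * 4 ^ (N - Nq') with hlQ
  have hp1 : p.1 = (kP : ℝ) * s4 N := by rw [hpeq]; exact lift4 kp' Np' N hNpN
  have hp2 : p.2 = (lP : ℝ) * s2 N := by rw [hpeq]; exact lift2 lp' Np' N hNpN
  have hq1 : q.1 = (kQ : ℝ) * s4 N := by rw [hqeq]; exact lift4 kq' Nq' N hNqN
  have hq2 : q.2 = (lQ : ℝ) * s2 N := by rw [hqeq]; exact lift2 lq' Nq' N hNqN
  have hxa : (kP : ℝ) * s4 N ≤ a := by rw [← hp1]; exact hpR.1.2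
  have hya : (lP : ℝ) * s2 N ≤ b := by rw [← hp2]; exact hpR.2.2
  have hxa' : (kQ : ℝ) * s4 N ≤ a := by rw [← hq1]; exact hqR.1.2
  have hya' : (lQ : ℝ) * s2 N ≤ b := by rw [← hq2]; exact hqR.2.2
  set kp₀ := kP / 16 ^ (N - n₀) with hkp₀
  set lp₀ := lP / 4 ^ (N - n₀) with hlp₀
  set kq₀ := kQ / 16 ^ (N - n₀) with hkq₀
  set lq₀ := lQ / 4 ^ (N - n₀) with hlq₀
  -- the refinement chains
  have Rp := Jrefine a b n₀ N kP lP hxa hya (N - n₀) n₀ (by omega) le_rfl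
  have Rq := Jrefine a b n₀ N kQ lQ hxa' hya' (N - n₀) n₀ (by omega) le_rfl
  have hpE : p = ((kP : ℝ) * s4 N, (lP : ℝ) * s2 N) := Prod.ext_iff.2 ⟨hp1, hp2⟩
  have hqE : q = ((kQ : ℝ) * s4 N, (lQ : ℝ) * s2 N) := Prod.ext_iff.2 ⟨hq1, hq2⟩
  rw [← hpE] at Rp
  rw [← hqE] at Rq
  -- Delta bounds
  have hDeq : Delta (p - q) = max (|p.1 - q.1| ^ ((1:ℝ)/4)) (|p.2 - q.2| ^ ((1:ℝ)/2)) := rfl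
  have habs1 : |p.1 - q.1| ≤ 1 := by
    rw [abs_sub_le_iff]
    constructor <;> [skip; skip] <;>
      [linarith [hpR.1.1, hpR.1.2, hqR.1.1, hqR.1.2, ha.2];
       linarith [hpR.1.1, hpR.1.2, hqR.1.1, hqR.1.2, ha.2]]
  have habs2 : |p.2 - q.2| ≤ 1 := by
    rw [abs_sub_le_iff]
    constructor <;> [skip; skip] <;>
      [linarith [hpR.2.1, hpR.2.2, hqR.2.1, hqR.2.2, hb.2];
       linarith [hpR.2.1, hpR.2.2, hqR.2.1, hqR.2.2, hb.2]]
  have hDpos : 0 < Delta (p - q) := by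
    have hcomp : p.1 ≠ q.1 ∨ p.2 ≠ q.2 := by
      by_contra h
      push_neg at h
      exact hpq (Prod.ext_iff.2 ⟨h.1, h.2⟩)
    rcases hcomp with h | h
    · exact lt_of_lt_of_le (Real.rpow_pos_of_pos (abs_pos.2 (sub_ne_zero.2 h)) _)
        (hDeq ▸ le_max_left _ _)
    · exact lt_of_lt_of_le (Real.rpow_pos_of_pos (abs_pos.2 (sub_ne_zero.2 h)) _)
        (hDeq ▸ le_max_right _ _)
  have hD1 : Delta (p - q) ≤ 1 := by
    rw [hDeq]
    exact max_le (Real.rpow_le_one (abs_nonneg _) habs1 (by norm_num))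
      (Real.rpow_le_one (abs_nonneg _) habs2 (by norm_num))
  have hinvD : 1 ≤ 1 / Delta (p - q) := by rw [le_div_iff₀ hDpos]; linarith
  have hlog : (n₀ : ℝ) ≤ Real.logb 2 (1 / Delta (p - q)) := by
    rw [hn₀]
    exact Nat.floor_le (Real.logb_nonneg one_lt_two hinvD)
  have hpow : (2:ℝ) ^ (n₀ : ℕ) ≤ 1 / Delta (p - q) := by
    calc (2:ℝ) ^ (n₀ : ℕ) = (2:ℝ) ^ ((n₀ : ℕ) : ℝ) := (Real.rpow_natCast 2 n₀).symm
      _ ≤ (2:ℝ) ^ Real.logb 2 (1 / Delta (p - q)) :=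
          Real.rpow_le_rpow_of_exponent_le one_le_two hlog
      _ = 1 / Delta (p - q) := Real.rpow_logb (by norm_num) (by norm_num) (by positivity)
  have hD : Delta (p - q) ≤ ((2:ℝ) ^ (n₀ : ℕ))⁻¹ := by
    rw [inv_eq_one_div, le_div_iff₀ (by positivity)]
    calc Delta (p - q) * 2 ^ (n₀ : ℕ) ≤ Delta (p - q) * (1 / Delta (p - q)) :=
          mul_le_mul_of_nonneg_left hpow hDpos.le
      _ = 1 := by field_simp
  have hd1 : |p.1 - q.1| ≤ s4 n₀ := by
    have e1 : |p.1 - q.1| = (|p.1 - q.1| ^ ((1:ℝ)/4)) ^ (4:ℕ) := by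
      rw [← Real.rpow_natCast (|p.1 - q.1| ^ ((1:ℝ)/4)) 4, ← Real.rpow_mul (abs_nonneg _)]
      norm_num
    rw [e1, s4_eq]
    calc (|p.1 - q.1| ^ ((1:ℝ)/4)) ^ (4:ℕ) ≤ (Delta (p - q)) ^ (4:ℕ) :=
          pow_le_pow_left₀ (Real.rpow_nonneg (abs_nonneg _) _) (hDeq ▸ le_max_left _ _) 4
      _ ≤ (((2:ℝ) ^ (n₀ : ℕ))⁻¹) ^ (4:ℕ) := pow_le_pow_left₀ hDpos.le hD 4
      _ = ((2:ℝ) ^ (4 * n₀))⁻¹ := by rw [← inv_pow, ← pow_mul, Nat.mul_comm, inv_pow]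
  have hd2 : |p.2 - q.2| ≤ s2 n₀ := by
    have e1 : |p.2 - q.2| = (|p.2 - q.2| ^ ((1:ℝ)/2)) ^ (2:ℕ) := by
      rw [← Real.rpow_natCast (|p.2 - q.2| ^ ((1:ℝ)/2)) 2, ← Real.rpow_mul (abs_nonneg _)]
      norm_num
    rw [e1, s2_eq]
    calc (|p.2 - q.2| ^ ((1:ℝ)/2)) ^ (2:ℕ) ≤ (Delta (p - q)) ^ (2:ℕ) :=
          pow_le_pow_left₀ (Real.rpow_nonneg (abs_nonneg _) _) (hDeq ▸ le_max_right _ _) 2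
      _ ≤ (((2:ℝ) ^ (n₀ : ℕ))⁻¹) ^ (2:ℕ) := pow_le_pow_left₀ hDpos.le hD 2
      _ = ((2:ℝ) ^ (2 * n₀))⁻¹ := by rw [← inv_pow, ← pow_mul, Nat.mul_comm, inv_pow]
  -- nearest coarse grid points
  have hp_lb : (kp₀ : ℝ) * s4 n₀ ≤ p.1 := by rw [hp1]; exact val_le4 n₀ hn₀N
  have hq_lb : (kq₀ : ℝ) * s4 n₀ ≤ q.1 := by rw [hq1]; exact val_le4 n₀ hn₀N
  have hp_lb2 : (lp₀ : ℝ) * s2 n₀ ≤ p.2 := by rw [hp2]; exact val_le2 n₀ hn₀N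
  have hq_lb2 : (lq₀ : ℝ) * s2 n₀ ≤ q.2 := by rw [hq2]; exact val_le2 n₀ hn₀N
  have hp_ub : p.1 < ((kp₀ : ℝ) + 1) * s4 n₀ := by
    rw [hp1]
    have := val_lt4 kP N n₀ hn₀N
    push_cast at this
    convert this using 2
  have hq_ub : q.1 < ((kq₀ : ℝ) + 1) * s4 n₀ := by
    rw [hq1]
    have := val_lt4 kQ N n₀ hn₀N
    push_cast at this
    convert this using 2
  have hp_ub2 : p.2 < ((lp₀ : ℝ) + 1) * s2 n₀ := by
    rw [hp2]
    have := val_lt2 lP N n₀ hn₀N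
    push_cast at this
    convert this using 2
  have hq_ub2 : q.2 < ((lq₀ : ℝ) + 1) * s2 n₀ := by
    rw [hq2]
    have := val_lt2 lQ N n₀ hn₀N
    push_cast at this
    convert this using 2
  have habs1' := abs_le.1 hd1
  have habs2' := abs_le.1 hd2
  have hs4 := s4_pos n₀
  have hs2 := s2_pos n₀
  have hk1 : kq₀ ≤ kp₀ + 1 := by
    by_contra hcon
    push_neg at hcon
    have hc : ((kp₀ : ℝ) + 2) ≤ (kq₀ : ℝ) := by exact_mod_cast Nat.succ_le_of_lt hcon
    have hA : ((kp₀ : ℝ) + 2) * s4 n₀ ≤ q.1 :=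
      le_trans (mul_le_mul_of_nonneg_right hc hs4.le) hq_lb
    linarith [habs1'.1]
  have hk2 : kp₀ ≤ kq₀ + 1 := by
    by_contra hcon
    push_neg at hcon
    have hc : ((kq₀ : ℝ) + 2) ≤ (kp₀ : ℝ) := by exact_mod_cast Nat.succ_le_of_lt hcon
    have hA : ((kq₀ : ℝ) + 2) * s4 n₀ ≤ p.1 :=
      le_trans (mul_le_mul_of_nonneg_right hc hs4.le) hp_lb
    linarith [habs1'.2]
  have hl1 : lq₀ ≤ lp₀ + 1 := by
    by_contra hcon
    push_neg at hcon
    have hc : ((lp₀ : ℝ) + 2) ≤ (lq₀ : ℝ) := by exact_mod_cast Nat.succ_le_of_lt hcon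
    have hA : ((lp₀ : ℝ) + 2) * s2 n₀ ≤ q.2 :=
      le_trans (mul_le_mul_of_nonneg_right hc hs2.le) hq_lb2
    linarith [habs2'.1]
  have hl2 : lp₀ ≤ lq₀ + 1 := by
    by_contra hcon
    push_neg at hcon
    have hc : ((lq₀ : ℝ) + 2) ≤ (lp₀ : ℝ) := by exact_mod_cast Nat.succ_le_of_lt hcon
    have hA : ((lq₀ : ℝ) + 2) * s2 n₀ ≤ p.2 :=
      le_trans (mul_le_mul_of_nonneg_right hc hs2.le) hp_lb2
    linarith [habs2'.2]
  -- connector memberships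
  have hkpa : (kp₀ : ℝ) * s4 n₀ ≤ a := le_trans hp_lb hpR.1.2
  have hkqa : (kq₀ : ℝ) * s4 n₀ ≤ a := le_trans hq_lb hqR.1.2
  have hlpb : (lp₀ : ℝ) * s2 n₀ ≤ b := le_trans hp_lb2 hpR.2.2
  have hlqb : (lq₀ : ℝ) * s2 n₀ ≤ b := le_trans hq_lb2 hqR.2.2
  have hmemH : ∀ j : ℕ, j ≤ kp₀ ∨ j ≤ kq₀ → ((j : ℝ) * s4 n₀, (lp₀ : ℝ) * s2 n₀) ∈ SS a b := by
    intro j hj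
    refine mem_SS n₀ j lp₀ ?_ hlpb
    rcases hj with hj | hj
    · exact le_trans (mul_le_mul_of_nonneg_right (Nat.cast_le.2 hj) hs4.le) hkpa
    · exact le_trans (mul_le_mul_of_nonneg_right (Nat.cast_le.2 hj) hs4.le) hkqa
  have hmemV : ∀ j : ℕ, j ≤ lp₀ ∨ j ≤ lq₀ → ((kq₀ : ℝ) * s4 n₀, (j : ℝ) * s2 n₀) ∈ SS a b := by
    intro j hj
    refine mem_SS n₀ kq₀ j hkqa ?_
    rcases hj with hj | hj
    · exact le_trans (mul_le_mul_of_nonneg_right (Nat.cast_le.2 hj) hs2.le) hlpb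
    · exact le_trans (mul_le_mul_of_nonneg_right (Nat.cast_le.2 hj) hs2.le) hlqb
  have CH : J n₀ (SS a b) ((kp₀ : ℝ) * s4 n₀, (lp₀ : ℝ) * s2 n₀)
      ((kq₀ : ℝ) * s4 n₀, (lp₀ : ℝ) * s2 n₀) (fun m => if m = n₀ then 1 else 0) := by
    rcases le_total kp₀ kq₀ with hle | hle
    · have := Jh (n₀ := n₀) n₀ le_rfl ((lp₀ : ℝ) * s2 n₀) kp₀ kq₀ hle
        (fun j h1 h2 => hmemH j (Or.inr h2))
      exact this.mono (fun m => by split_ifs <;> omega)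
    · have := (Jh (n₀ := n₀) n₀ le_rfl ((lp₀ : ℝ) * s2 n₀) kq₀ kp₀ hle
        (fun j h1 h2 => hmemH j (Or.inl h2))).symm
      exact this.mono (fun m => by split_ifs <;> omega)
  have CV : J n₀ (SS a b) ((kq₀ : ℝ) * s4 n₀, (lp₀ : ℝ) * s2 n₀)
      ((kq₀ : ℝ) * s4 n₀, (lq₀ : ℝ) * s2 n₀) (fun m => if m = n₀ then 1 else 0) := by
    rcases le_total lp₀ lq₀ with hle | hle
    · have := Jv (n₀ := n₀) n₀ le_rfl ((kq₀ : ℝ) * s4 n₀) lp₀ lq₀ hle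
        (fun j h1 h2 => hmemV j (Or.inr h2))
      exact this.mono (fun m => by split_ifs <;> omega)
    · have := (Jv (n₀ := n₀) n₀ le_rfl ((kq₀ : ℝ) * s4 n₀) lq₀ lp₀ hle
        (fun j h1 h2 => hmemV j (Or.inl h2))).symm
      exact this.mono (fun m => by split_ifs <;> omega)
  have hJ := ((Rp.symm.trans CH).trans CV).trans Rq.symm.symm
  have hJ40 : J n₀ (SS a b) p q (fun _ => 40) :=
    hJ.mono (fun m => by split_ifs <;> omega)
  obtain ⟨m, path, typ, h0, hm, hseg, hcard⟩ := hJ40.toPath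
  exact ⟨m, path, typ, h0, hm, hseg, hcard⟩
end

section
/- Union-bound chaining probability estimate: Let R₁ = [0,a]×[0,b] with a,b ∈ [0,1], grids 𝒢ₙ as above, and let n_{R₁} be the largest n such that 𝒢ₙ ∩ R₁ is contained in a single grid rectangle of type n. Let Y : R₁ × Ω → ℝ^d be a stochastic process, and suppose (δₙ), (εₙ) are nonnegative sequences such that for all n ≥ n_{R₁} and every nearest-neighbor pair p¹,p² ∈ 𝒢ₙ ∩ R₁, P{|Y(p¹) - Y(p²)| > δₙ} ≤ εₙ. Let A be the event that for all p¹,p² ∈ 𝒢 ∩ R₁, |Y(p¹) - Y(p²)| ≤ 40·Σ_{n=n₀(p¹,p²)}^∞ δₙ. Then P(Aᶜ) ≤ 4·Σ_{n=n_{R₁}}^∞ 2^{6n} εₙ. -/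
open MeasureTheory
open scoped ENNReal

/-- `𝒢ₙ ∩ R₁` is contained in a single grid rectangle of type `n`. -/
def InSingleRect (R₁ : Set (ℝ × ℝ)) (n : ℕ) : Prop :=
  ∃ k l : ℕ, grid n ∩ R₁ ⊆
    Set.Icc ((k : ℝ) * 2 ^ (-(4 * n : ℤ))) ((k + 1 : ℝ) * 2 ^ (-(4 * n : ℤ))) ×ˢ
    Set.Icc ((l : ℝ) * 2 ^ (-(2 * n : ℤ))) ((l + 1 : ℝ) * 2 ^ (-(2 * n : ℤ)))

namespace ChainAux

noncomputable def pt (n k l : ℕ) : ℝ × ℝ :=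
  ((k : ℝ) * 2 ^ (-(4 * n : ℤ)), (l : ℝ) * 2 ^ (-(2 * n : ℤ)))

lemma pt_mem_grid (n k l : ℕ) : pt n k l ∈ grid n := ⟨k, l, rfl⟩

lemma two_zpow_pos (z : ℤ) : (0:ℝ) < 2 ^ z := zpow_pos (by norm_num) z

lemma two_pow_mul_zpow_neg (c : ℕ) : (2:ℝ) ^ c * 2 ^ (-(c : ℤ)) = 1 := by
  rw [← zpow_natCast (2:ℝ) c, ← zpow_add₀ (two_ne_zero)]; norm_num

def Rect (a b : ℝ) : Set (ℝ × ℝ) := Set.Icc 0 a ×ˢ Set.Icc 0 b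

lemma mem_rect_iff {a b : ℝ} {p : ℝ × ℝ} :
    p ∈ Rect a b ↔ (0 ≤ p.1 ∧ p.1 ≤ a) ∧ (0 ≤ p.2 ∧ p.2 ≤ b) := by
  simp only [Rect, Set.mem_prod, Set.mem_Icc]

lemma pt_mem_rect_iff {a b : ℝ} {n k l : ℕ} :
    pt n k l ∈ Rect a b ↔ (k : ℝ) * 2 ^ (-(4 * n : ℤ)) ≤ a ∧ (l : ℝ) * 2 ^ (-(2 * n : ℤ)) ≤ b := by
  rw [mem_rect_iff]
  constructor
  · rintro ⟨⟨_, h1⟩, ⟨_, h2⟩⟩; exact ⟨h1, h2⟩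
  · rintro ⟨h1, h2⟩
    refine ⟨⟨?_, h1⟩, ⟨?_, h2⟩⟩ <;>
      exact mul_nonneg (Nat.cast_nonneg _) (two_zpow_pos _).le

lemma pt_mem_mono {a b : ℝ} {n k l k' l' : ℕ} (hk : k' ≤ k) (hl : l' ≤ l)
    (h : pt n k l ∈ Rect a b) : pt n k' l' ∈ Rect a b := by
  rw [pt_mem_rect_iff] at h ⊢
  refine ⟨le_trans ?_ h.1, le_trans ?_ h.2⟩
  · exact mul_le_mul_of_nonneg_right (by exact_mod_cast hk) (two_zpow_pos _).le
  · exact mul_le_mul_of_nonneg_right (by exact_mod_cast hl) (two_zpow_pos _).le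

lemma pt_add (m j k l : ℕ) : pt m k l = pt (m + j) (k * 2 ^ (4 * j)) (l * 2 ^ (2 * j)) := by
  unfold pt
  rw [Prod.mk.injEq]
  constructor
  · push_cast
    rw [mul_assoc, ← zpow_natCast (2:ℝ) (4*j), ← zpow_add₀ (two_ne_zero : (2:ℝ) ≠ 0)]
    congr 1
    push_cast; ring
  · push_cast
    rw [mul_assoc, ← zpow_natCast (2:ℝ) (2*j), ← zpow_add₀ (two_ne_zero : (2:ℝ) ≠ 0)]
    congr 1
    push_cast; ring

/-- The projection of `r` to the level-`n` grid (coordinatewise floor). -/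
noncomputable def proj (n : ℕ) (r : ℝ × ℝ) : ℝ × ℝ :=
  pt n ⌊r.1 * 2 ^ (4 * n)⌋₊ ⌊r.2 * 2 ^ (2 * n)⌋₊

lemma floor_mul_le {x : ℝ} (hx : 0 ≤ x) (c : ℕ) :
    (⌊x * 2 ^ c⌋₊ : ℝ) * 2 ^ (-(c : ℤ)) ≤ x := by
  have h1 : (⌊x * 2 ^ c⌋₊ : ℝ) ≤ x * 2 ^ c := Nat.floor_le (by positivity)
  have := mul_le_mul_of_nonneg_right h1 (two_zpow_pos (-(c:ℤ))).le
  calc (⌊x * 2 ^ c⌋₊ : ℝ) * 2 ^ (-(c : ℤ)) ≤ x * 2 ^ c * 2 ^ (-(c : ℤ)) := this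
    _ = x * ((2:ℝ) ^ c * 2 ^ (-(c : ℤ))) := by ring
    _ = x := by rw [two_pow_mul_zpow_neg]; ring

lemma proj_mem {a b : ℝ} {r : ℝ × ℝ} (hr : r ∈ Rect a b) (n : ℕ) : proj n r ∈ Rect a b := by
  rw [mem_rect_iff] at hr
  rw [proj, pt_mem_rect_iff]
  exact ⟨(floor_mul_le hr.1.1 (4*n)).trans hr.1.2, (floor_mul_le hr.2.1 (2*n)).trans hr.2.2⟩

lemma mul_zpow_cancel {z : ℤ} {c : ℕ} (hz : z = -(c:ℤ)) (x : ℝ) :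
    x * 2 ^ z * 2 ^ c = x := by
  subst hz
  rw [mul_assoc, mul_comm ((2:ℝ) ^ (-(c:ℤ))), two_pow_mul_zpow_neg, mul_one]

lemma proj_pt_self (n k l : ℕ) : proj n (pt n k l) = pt n k l := by
  unfold proj pt
  rw [mul_zpow_cancel (c := 4*n) (by push_cast; ring),
    mul_zpow_cancel (c := 2*n) (by push_cast; ring), Nat.floor_natCast, Nat.floor_natCast]

lemma proj_eq_self {n m : ℕ} {r : ℝ × ℝ} (hr : r ∈ grid m) (hmn : m ≤ n) : proj n r = r := by
  obtain ⟨k, l, rfl⟩ := hr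
  have : ((k : ℝ) * 2 ^ (-(4 * m : ℤ)), (l : ℝ) * 2 ^ (-(2 * m : ℤ))) = pt m k l := rfl
  rw [this, pt_add m (n - m) k l, Nat.add_sub_cancel' hmn, proj_pt_self]

section Chain

open Finset

variable {E : Type*} [NormedAddCommGroup E]

lemma norm_sub_triangle (x y z : E) : ‖x - z‖ ≤ ‖x - y‖ + ‖y - z‖ := by
  have := dist_triangle x y z
  simpa [dist_eq_norm] using this

lemma chainH (f : ℝ × ℝ → E) {a b : ℝ} {n : ℕ} {δn : ℝ}
    (good : ∀ k l : ℕ, pt n k l ∈ Rect a b → pt n (k+1) l ∈ Rect a b →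
      ‖f (pt n (k+1) l) - f (pt n k l)‖ ≤ δn) :
    ∀ (t k l : ℕ), pt n (k+t) l ∈ Rect a b → pt n k l ∈ Rect a b →
      ‖f (pt n (k+t) l) - f (pt n k l)‖ ≤ t * δn := by
  intro t
  induction t with
  | zero => intro k l _ _; simp
  | succ t ih =>
    intro k l h1 h2
    have hmid : pt n (k+t) l ∈ Rect a b := pt_mem_mono (by omega) le_rfl h1
    calc ‖f (pt n (k+(t+1)) l) - f (pt n k l)‖
        ≤ ‖f (pt n ((k+t)+1) l) - f (pt n (k+t) l)‖ + ‖f (pt n (k+t) l) - f (pt n k l)‖ := by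
          have : k + (t+1) = (k+t)+1 := rfl
          rw [this]; exact norm_sub_triangle _ _ _
      _ ≤ δn + t * δn := add_le_add (good (k+t) l hmid h1) (ih k l hmid h2)
      _ = (t+1 : ℕ) * δn := by push_cast; ring

lemma chainV (f : ℝ × ℝ → E) {a b : ℝ} {n : ℕ} {δn : ℝ}
    (good : ∀ k l : ℕ, pt n k l ∈ Rect a b → pt n k (l+1) ∈ Rect a b →
      ‖f (pt n k (l+1)) - f (pt n k l)‖ ≤ δn) :
    ∀ (t k l : ℕ), pt n k (l+t) ∈ Rect a b → pt n k l ∈ Rect a b →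
      ‖f (pt n k (l+t)) - f (pt n k l)‖ ≤ t * δn := by
  intro t
  induction t with
  | zero => intro k l _ _; simp
  | succ t ih =>
    intro k l h1 h2
    have hmid : pt n k (l+t) ∈ Rect a b := pt_mem_mono le_rfl (by omega) h1
    calc ‖f (pt n k (l+(t+1))) - f (pt n k l)‖
        ≤ ‖f (pt n k ((l+t)+1)) - f (pt n k (l+t))‖ + ‖f (pt n k (l+t)) - f (pt n k l)‖ := by
          have : l + (t+1) = (l+t)+1 := rfl
          rw [this]; exact norm_sub_triangle _ _ _
      _ ≤ δn + t * δn := add_le_add (good k (l+t) hmid h1) (ih k l hmid h2)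
      _ = (t+1 : ℕ) * δn := by push_cast; ring

lemma chainH_abs (f : ℝ × ℝ → E) {a b : ℝ} {n : ℕ} {δn : ℝ} (hδn : 0 ≤ δn)
    (good : ∀ k l : ℕ, pt n k l ∈ Rect a b → pt n (k+1) l ∈ Rect a b →
      ‖f (pt n (k+1) l) - f (pt n k l)‖ ≤ δn)
    (k₁ k₂ l : ℕ) (h1 : pt n k₁ l ∈ Rect a b) (h2 : pt n k₂ l ∈ Rect a b) :
    ‖f (pt n k₁ l) - f (pt n k₂ l)‖ ≤ |(k₁:ℝ) - k₂| * δn := by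
  rcases le_total k₂ k₁ with h | h
  · obtain ⟨t, rfl⟩ := Nat.exists_eq_add_of_le h
    have := chainH f good t k₂ l h1 h2
    have habs : |((k₂+t:ℕ):ℝ) - k₂| = (t:ℝ) := by
      push_cast; rw [add_sub_cancel_left, abs_of_nonneg (Nat.cast_nonneg t)]
    rw [habs]; exact this
  · obtain ⟨t, rfl⟩ := Nat.exists_eq_add_of_le h
    have := chainH f good t k₁ l h2 h1
    have habs : |(k₁:ℝ) - ((k₁+t:ℕ):ℝ)| = (t:ℝ) := by
      push_cast
      rw [show (k₁:ℝ) - (k₁ + t) = -t by ring, abs_neg, abs_of_nonneg (Nat.cast_nonneg t)]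
    rw [norm_sub_rev, habs]; exact this

lemma chainV_abs (f : ℝ × ℝ → E) {a b : ℝ} {n : ℕ} {δn : ℝ} (hδn : 0 ≤ δn)
    (good : ∀ k l : ℕ, pt n k l ∈ Rect a b → pt n k (l+1) ∈ Rect a b →
      ‖f (pt n k (l+1)) - f (pt n k l)‖ ≤ δn)
    (k l₁ l₂ : ℕ) (h1 : pt n k l₁ ∈ Rect a b) (h2 : pt n k l₂ ∈ Rect a b) :
    ‖f (pt n k l₁) - f (pt n k l₂)‖ ≤ |(l₁:ℝ) - l₂| * δn := by
  rcases le_total l₂ l₁ with h | h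
  · obtain ⟨t, rfl⟩ := Nat.exists_eq_add_of_le h
    have := chainV f good t k l₂ h1 h2
    have habs : |((l₂+t:ℕ):ℝ) - l₂| = (t:ℝ) := by
      push_cast; rw [add_sub_cancel_left, abs_of_nonneg (Nat.cast_nonneg t)]
    rw [habs]; exact this
  · obtain ⟨t, rfl⟩ := Nat.exists_eq_add_of_le h
    have := chainV f good t k l₁ h2 h1
    have habs : |(l₁:ℝ) - ((l₁+t:ℕ):ℝ)| = (t:ℝ) := by
      push_cast
      rw [show (l₁:ℝ) - (l₁ + t) = -t by ring, abs_neg, abs_of_nonneg (Nat.cast_nonneg t)]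
    rw [norm_sub_rev, habs]; exact this

lemma chain2 (f : ℝ × ℝ → E) {a b : ℝ} {n : ℕ} {δn : ℝ} (hδn : 0 ≤ δn)
    (goodH : ∀ k l : ℕ, pt n k l ∈ Rect a b → pt n (k+1) l ∈ Rect a b →
      ‖f (pt n (k+1) l) - f (pt n k l)‖ ≤ δn)
    (goodV : ∀ k l : ℕ, pt n k l ∈ Rect a b → pt n k (l+1) ∈ Rect a b →
      ‖f (pt n k (l+1)) - f (pt n k l)‖ ≤ δn)
    (k₁ l₁ k₂ l₂ : ℕ) (h1 : pt n k₁ l₁ ∈ Rect a b) (h2 : pt n k₂ l₂ ∈ Rect a b) :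
    ‖f (pt n k₁ l₁) - f (pt n k₂ l₂)‖ ≤ (|(k₁:ℝ) - k₂| + |(l₁:ℝ) - l₂|) * δn := by
  have hmid : pt n k₂ l₁ ∈ Rect a b := by
    rw [pt_mem_rect_iff] at h1 h2 ⊢
    exact ⟨h2.1, h1.2⟩
  calc ‖f (pt n k₁ l₁) - f (pt n k₂ l₂)‖
      ≤ ‖f (pt n k₁ l₁) - f (pt n k₂ l₁)‖ + ‖f (pt n k₂ l₁) - f (pt n k₂ l₂)‖ :=
        norm_sub_triangle _ _ _
    _ ≤ |(k₁:ℝ) - k₂| * δn + |(l₁:ℝ) - l₂| * δn :=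
        add_le_add (chainH_abs f hδn goodH k₁ k₂ l₁ h1 hmid)
          (chainV_abs f hδn goodV k₂ l₁ l₂ hmid h2)
    _ = (|(k₁:ℝ) - k₂| + |(l₁:ℝ) - l₂|) * δn := by ring

end Chain

lemma abs_cast_sub_le {x y d : ℕ} (h1 : y ≤ x) (h2 : x ≤ y + d) : |(x:ℝ) - (y:ℝ)| ≤ (d:ℝ) := by
  have c1 : (y:ℝ) ≤ x := by exact_mod_cast h1
  have c2 : (x:ℝ) ≤ y + d := by exact_mod_cast h2
  rw [abs_sub_le_iff]
  constructor <;> linarith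

lemma floor_scale {s : ℕ} (hs : 0 < s) {y : ℝ} (hy : 0 ≤ y) :
    s * ⌊y⌋₊ ≤ ⌊y * s⌋₊ ∧ ⌊y * s⌋₊ ≤ s * ⌊y⌋₊ + (s - 1) := by
  constructor
  · apply Nat.le_floor
    push_cast
    rw [mul_comm]
    exact mul_le_mul_of_nonneg_right (Nat.floor_le hy) (by positivity)
  · have h1 : ⌊y * s⌋₊ < s * ⌊y⌋₊ + s := by
      rw [Nat.floor_lt (by positivity)]
      push_cast
      calc y * s < (⌊y⌋₊ + 1) * s :=
            mul_lt_mul_of_pos_right (Nat.lt_floor_add_one y) (by exact_mod_cast hs)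
        _ = s * ⌊y⌋₊ + s := by ring
    omega

variable {E : Type*} [NormedAddCommGroup E]

lemma proj_succ_close (f : ℝ × ℝ → E) {a b : ℝ} {δn1 : ℝ}
    (hδn1 : 0 ≤ δn1) {n : ℕ}
    (goodH : ∀ k l : ℕ, pt (n+1) k l ∈ Rect a b → pt (n+1) (k+1) l ∈ Rect a b →
      ‖f (pt (n+1) (k+1) l) - f (pt (n+1) k l)‖ ≤ δn1)
    (goodV : ∀ k l : ℕ, pt (n+1) k l ∈ Rect a b → pt (n+1) k (l+1) ∈ Rect a b →
      ‖f (pt (n+1) k (l+1)) - f (pt (n+1) k l)‖ ≤ δn1)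
    {r : ℝ × ℝ} (hrR : r ∈ Rect a b) :
    ‖f (proj (n+1) r) - f (proj n r)‖ ≤ 18 * δn1 := by
  have hx : 0 ≤ r.1 := (mem_rect_iff.mp hrR).1.1
  have hy : 0 ≤ r.2 := (mem_rect_iff.mp hrR).2.1
  have ex : r.1 * 2 ^ (4*(n+1)) = (r.1 * 2 ^ (4*n)) * ((16:ℕ):ℝ) := by
    push_cast
    rw [show 4*(n+1) = 4*n + 4 by ring, pow_add]
    norm_num
    ring
  have ey : r.2 * 2 ^ (2*(n+1)) = (r.2 * 2 ^ (2*n)) * ((4:ℕ):ℝ) := by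
    push_cast
    rw [show 2*(n+1) = 2*n + 2 by ring, pow_add]
    norm_num
    ring
  have hkb : 16 * ⌊r.1 * 2^(4*n)⌋₊ ≤ ⌊r.1 * 2^(4*(n+1))⌋₊ ∧
      ⌊r.1 * 2^(4*(n+1))⌋₊ ≤ 16 * ⌊r.1 * 2^(4*n)⌋₊ + 15 := by
    have h := floor_scale (s := 16) (by norm_num) (show 0 ≤ r.1 * 2^(4*n) by positivity)
    rw [← ex] at h
    simpa using h
  have hlb : 4 * ⌊r.2 * 2^(2*n)⌋₊ ≤ ⌊r.2 * 2^(2*(n+1))⌋₊ ∧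
      ⌊r.2 * 2^(2*(n+1))⌋₊ ≤ 4 * ⌊r.2 * 2^(2*n)⌋₊ + 3 := by
    have h := floor_scale (s := 4) (by norm_num) (show 0 ≤ r.2 * 2^(2*n) by positivity)
    rw [← ey] at h
    simpa using h
  have hproj1 : proj (n+1) r = pt (n+1) ⌊r.1 * 2^(4*(n+1))⌋₊ ⌊r.2 * 2^(2*(n+1))⌋₊ := rfl
  have hproj2 : proj n r = pt (n+1) (⌊r.1 * 2^(4*n)⌋₊ * 2^(4*1)) (⌊r.2 * 2^(2*n)⌋₊ * 2^(2*1)) := by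
    rw [proj, pt_add n 1]
  have hm1 : pt (n+1) ⌊r.1 * 2^(4*(n+1))⌋₊ ⌊r.2 * 2^(2*(n+1))⌋₊ ∈ Rect a b := by
    rw [← hproj1]; exact proj_mem hrR (n+1)
  have hm2 : pt (n+1) (⌊r.1 * 2^(4*n)⌋₊ * 2^(4*1)) (⌊r.2 * 2^(2*n)⌋₊ * 2^(2*1)) ∈ Rect a b := by
    rw [← hproj2]; exact proj_mem hrR n
  rw [hproj1, hproj2]
  refine le_trans (chain2 f hδn1 goodH goodV _ _ _ _ hm1 hm2) ?_
  have habs1 : |(⌊r.1 * 2^(4*(n+1))⌋₊ : ℝ) - ((⌊r.1 * 2^(4*n)⌋₊ * 2^(4*1) : ℕ) : ℝ)| ≤ 15 := by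
    rw [show ⌊r.1 * 2^(4*n)⌋₊ * 2^(4*1) = 16 * ⌊r.1 * 2^(4*n)⌋₊ by ring]
    exact_mod_cast abs_cast_sub_le hkb.1 hkb.2
  have habs2 : |(⌊r.2 * 2^(2*(n+1))⌋₊ : ℝ) - ((⌊r.2 * 2^(2*n)⌋₊ * 2^(2*1) : ℕ) : ℝ)| ≤ 3 := by
    rw [show ⌊r.2 * 2^(2*n)⌋₊ * 2^(2*1) = 4 * ⌊r.2 * 2^(2*n)⌋₊ by ring]
    exact_mod_cast abs_cast_sub_le hlb.1 hlb.2
  have : |(⌊r.1 * 2^(4*(n+1))⌋₊ : ℝ) - ((⌊r.1 * 2^(4*n)⌋₊ * 2^(4*1) : ℕ) : ℝ)| +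
      |(⌊r.2 * 2^(2*(n+1))⌋₊ : ℝ) - ((⌊r.2 * 2^(2*n)⌋₊ * 2^(2*1) : ℕ) : ℝ)| ≤ 18 := by linarith
  exact (mul_le_mul_of_nonneg_right this hδn1)

lemma telescope (f : ℝ × ℝ → E) {a b : ℝ} (δ : ℕ → ℝ) (hδ : ∀ i, 0 ≤ δ i) (nb : ℕ)
    (goodH : ∀ n', nb ≤ n' → ∀ k l : ℕ, pt n' k l ∈ Rect a b → pt n' (k+1) l ∈ Rect a b →
      ‖f (pt n' (k+1) l) - f (pt n' k l)‖ ≤ δ n')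
    (goodV : ∀ n', nb ≤ n' → ∀ k l : ℕ, pt n' k l ∈ Rect a b → pt n' k (l+1) ∈ Rect a b →
      ‖f (pt n' k (l+1)) - f (pt n' k l)‖ ≤ δ n')
    {r : ℝ × ℝ} {m : ℕ} (hrg : r ∈ grid m) (hrR : r ∈ Rect a b) :
    ∀ (t n : ℕ), nb ≤ n → m ≤ n + t →
      ‖f r - f (proj n r)‖ ≤ 18 * ∑ j ∈ Finset.range t, δ (n+1+j) := by
  intro t
  induction t with
  | zero =>
    intro n _ hmn
    rw [proj_eq_self hrg (by omega)]
    simp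
  | succ t ih =>
    intro n hnb hmn
    by_cases hc : m ≤ n
    · rw [proj_eq_self hrg hc]
      simp only [sub_self, norm_zero]
      have : (0:ℝ) ≤ ∑ j ∈ Finset.range (t+1), δ (n+1+j) :=
        Finset.sum_nonneg (fun j _ => hδ _)
      linarith
    · have step : ‖f (proj (n+1) r) - f (proj n r)‖ ≤ 18 * δ (n+1) :=
        proj_succ_close f (hδ (n+1)) (goodH (n+1) (by omega)) (goodV (n+1) (by omega)) hrR
      have tail : ‖f r - f (proj (n+1) r)‖ ≤ 18 * ∑ j ∈ Finset.range t, δ (n+2+j) :=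
        ih (n+1) (by omega) (by omega)
      calc ‖f r - f (proj n r)‖
          ≤ ‖f r - f (proj (n+1) r)‖ + ‖f (proj (n+1) r) - f (proj n r)‖ :=
            norm_sub_triangle _ _ _
        _ ≤ 18 * ∑ j ∈ Finset.range t, δ (n+2+j) + 18 * δ (n+1) := add_le_add tail step
        _ = 18 * ∑ j ∈ Finset.range (t+1), δ (n+1+j) := by
            rw [Finset.sum_range_succ' (fun j => δ (n+1+j)) t]
            have : ∀ j, n+1+(j+1) = n+2+j := by intro j; omega
            simp only [this]
            ring

lemma floor_close {x y : ℝ} (hx : 0 ≤ x) (hy : 0 ≤ y) (h : |x - y| ≤ 1) :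
    ⌊x⌋₊ ≤ ⌊y⌋₊ + 1 ∧ ⌊y⌋₊ ≤ ⌊x⌋₊ + 1 := by
  rw [abs_sub_le_iff] at h
  constructor
  · have hx1 : x ≤ y + 1 := by linarith
    calc ⌊x⌋₊ ≤ ⌊y + 1⌋₊ := Nat.floor_le_floor hx1
      _ = ⌊y⌋₊ + 1 := Nat.floor_add_one hy
  · have hy1 : y ≤ x + 1 := by linarith
    calc ⌊y⌋₊ ≤ ⌊x + 1⌋₊ := Nat.floor_le_floor hy1
      _ = ⌊x⌋₊ + 1 := Nat.floor_add_one hx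

lemma abs_cast_sub_le_one {x y : ℕ} (h1 : x ≤ y + 1) (h2 : y ≤ x + 1) :
    |(x:ℝ) - (y:ℝ)| ≤ 1 := by
  have c1 : (x:ℝ) ≤ y + 1 := by exact_mod_cast h1
  have c2 : (y:ℝ) ≤ x + 1 := by exact_mod_cast h2
  rw [abs_sub_le_iff]
  constructor <;> linarith

lemma delta_eq_zero_iff {p q : ℝ × ℝ} (h : Delta (p - q) = 0) : p = q := by
  have hD : Delta (p - q) = max (|p.1 - q.1| ^ ((1:ℝ)/4)) (|p.2 - q.2| ^ ((1:ℝ)/2)) := by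
    simp [Delta]
  rw [hD] at h
  have h1 : |p.1 - q.1| ^ ((1:ℝ)/4) = 0 := by
    have := le_max_left (|p.1 - q.1| ^ ((1:ℝ)/4)) (|p.2 - q.2| ^ ((1:ℝ)/2))
    have h0 : (0:ℝ) ≤ |p.1 - q.1| ^ ((1:ℝ)/4) := Real.rpow_nonneg (abs_nonneg _) _
    linarith [h ▸ this]
  have h2 : |p.2 - q.2| ^ ((1:ℝ)/2) = 0 := by
    have := le_max_right (|p.1 - q.1| ^ ((1:ℝ)/4)) (|p.2 - q.2| ^ ((1:ℝ)/2))
    have h0 : (0:ℝ) ≤ |p.2 - q.2| ^ ((1:ℝ)/2) := Real.rpow_nonneg (abs_nonneg _) _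
    linarith [h ▸ this]
  rw [Real.rpow_eq_zero (abs_nonneg _) (by norm_num)] at h1 h2
  have e1 : p.1 = q.1 := by rwa [abs_eq_zero, sub_eq_zero] at h1
  have e2 : p.2 = q.2 := by rwa [abs_eq_zero, sub_eq_zero] at h2
  exact Prod.ext e1 e2

lemma delta_bound {a b : ℝ} (ha : a ≤ 1) (hb : b ≤ 1) {p q : ℝ × ℝ}
    (hp : p ∈ Rect a b) (hq : q ∈ Rect a b) (hD : Delta (p - q) ≠ 0) :
    |p.1 - q.1| * 2 ^ (4 * ⌊Real.logb 2 (1 / Delta (p - q))⌋₊) ≤ 1 ∧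
    |p.2 - q.2| * 2 ^ (2 * ⌊Real.logb 2 (1 / Delta (p - q))⌋₊) ≤ 1 := by
  set D := Delta (p - q) with hDdef
  set n₀ := ⌊Real.logb 2 (1 / D)⌋₊ with hn₀
  have hD1 : D = max (|p.1 - q.1| ^ ((1:ℝ)/4)) (|p.2 - q.2| ^ ((1:ℝ)/2)) := by
    rw [hDdef]; simp [Delta]
  rw [mem_rect_iff] at hp hq
  have hx1 : |p.1 - q.1| ≤ 1 := by
    rw [abs_sub_le_iff]; constructor <;> linarith [hp.1.1, hp.1.2, hq.1.1, hq.1.2]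
  have hy1 : |p.2 - q.2| ≤ 1 := by
    rw [abs_sub_le_iff]; constructor <;> linarith [hp.2.1, hp.2.2, hq.2.1, hq.2.2]
  have hD0 : 0 ≤ D := by
    rw [hD1]; exact le_trans (Real.rpow_nonneg (abs_nonneg _) _) (le_max_left _ _)
  have hDpos : 0 < D := hD0.lt_of_ne (Ne.symm hD)
  have hDle1 : D ≤ 1 := by
    rw [hD1]
    exact max_le (Real.rpow_le_one (abs_nonneg _) hx1 (by norm_num))
      (Real.rpow_le_one (abs_nonneg _) hy1 (by norm_num))
  have hlog : (n₀:ℝ) ≤ Real.logb 2 (1 / D) :=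
    Nat.floor_le (Real.logb_nonneg one_lt_two (one_le_one_div hDpos hDle1))
  have h2 : (2:ℝ) ^ (n₀:ℝ) ≤ 1 / D := by
    calc (2:ℝ) ^ (n₀:ℝ) ≤ 2 ^ (Real.logb 2 (1 / D)) :=
          Real.rpow_le_rpow_of_exponent_le one_le_two hlog
      _ = 1 / D := Real.rpow_logb two_pos (by norm_num) (by positivity)
  have h2' : (2:ℝ) ^ (n₀:ℕ) ≤ 1 / D := by rwa [← Real.rpow_natCast 2 n₀]
  have key : D * 2 ^ (n₀:ℕ) ≤ 1 := by
    calc D * 2 ^ (n₀:ℕ) ≤ D * (1 / D) := mul_le_mul_of_nonneg_left h2' hD0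
      _ = 1 := by field_simp
  constructor
  · have e1 : (|p.1 - q.1| ^ ((1:ℝ)/4)) ^ (4:ℕ) = |p.1 - q.1| := by
      rw [← Real.rpow_natCast (|p.1 - q.1| ^ ((1:ℝ)/4)) 4, ← Real.rpow_mul (abs_nonneg _)]
      norm_num
    have hb4 : |p.1 - q.1| ≤ D ^ (4:ℕ) := by
      rw [← e1]
      exact pow_le_pow_left₀ (Real.rpow_nonneg (abs_nonneg _) _)
        (by rw [hD1]; exact le_max_left _ _) 4
    calc |p.1 - q.1| * 2 ^ (4*n₀) ≤ D ^ (4:ℕ) * 2 ^ (4*n₀) :=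
          mul_le_mul_of_nonneg_right hb4 (by positivity)
      _ = (D * 2 ^ (n₀:ℕ)) ^ (4:ℕ) := by rw [mul_pow, ← pow_mul, Nat.mul_comm n₀ 4]
      _ ≤ 1 ^ (4:ℕ) := pow_le_pow_left₀ (by positivity) key 4
      _ = 1 := one_pow 4
  · have e1 : (|p.2 - q.2| ^ ((1:ℝ)/2)) ^ (2:ℕ) = |p.2 - q.2| := by
      rw [← Real.rpow_natCast (|p.2 - q.2| ^ ((1:ℝ)/2)) 2, ← Real.rpow_mul (abs_nonneg _)]
      norm_num
    have hb4 : |p.2 - q.2| ≤ D ^ (2:ℕ) := by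
      rw [← e1]
      exact pow_le_pow_left₀ (Real.rpow_nonneg (abs_nonneg _) _)
        (by rw [hD1]; exact le_max_right _ _) 2
    calc |p.2 - q.2| * 2 ^ (2*n₀) ≤ D ^ (2:ℕ) * 2 ^ (2*n₀) :=
          mul_le_mul_of_nonneg_right hb4 (by positivity)
      _ = (D * 2 ^ (n₀:ℕ)) ^ (2:ℕ) := by rw [mul_pow, ← pow_mul, Nat.mul_comm n₀ 2]
      _ ≤ 1 ^ (2:ℕ) := pow_le_pow_left₀ (by positivity) key 2
      _ = 1 := one_pow 2

lemma coord_le {x c : ℕ} {z : ℤ} (hz : z = -(c:ℤ)) (h : (x:ℝ) * 2 ^ z ≤ 1) : x ≤ 2 ^ c := by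
  have hx : (x:ℝ) ≤ 2 ^ c := by
    calc (x:ℝ) = (x:ℝ) * 2 ^ z * 2 ^ c := (mul_zpow_cancel hz _).symm
      _ ≤ 1 * 2 ^ c := mul_le_mul_of_nonneg_right h (by positivity)
      _ = 2 ^ c := one_mul _
  exact_mod_cast hx

section Bad

open MeasureTheory
open scoped ENNReal

variable {Ω : Type} {E : Type*} [MeasurableSpace Ω] [NormedAddCommGroup E]

open Classical in
/-- Horizontal bad event at level `n`. -/
noncomputable def EH (Y : ℝ × ℝ → Ω → E) (a b : ℝ) (δ : ℕ → ℝ) (n k l : ℕ) : Set Ω :=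
  if pt n k l ∈ Rect a b ∧ pt n (k+1) l ∈ Rect a b then
    {ω | δ n < ‖Y (pt n (k+1) l) ω - Y (pt n k l) ω‖} else ∅

open Classical in
/-- Vertical bad event at level `n`. -/
noncomputable def EV (Y : ℝ × ℝ → Ω → E) (a b : ℝ) (δ : ℕ → ℝ) (n k l : ℕ) : Set Ω :=
  if pt n k l ∈ Rect a b ∧ pt n k (l+1) ∈ Rect a b then
    {ω | δ n < ‖Y (pt n k (l+1)) ω - Y (pt n k l) ω‖} else ∅

/-- The bad event at level `n`. -/
noncomputable def Bad (Y : ℝ × ℝ → Ω → E) (a b : ℝ) (δ : ℕ → ℝ) (n : ℕ) : Set Ω :=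
  (⋃ k ∈ Finset.range (2^(4*n)), ⋃ l ∈ Finset.range (2^(2*n)+1), EH Y a b δ n k l) ∪
  (⋃ k ∈ Finset.range (2^(4*n)+1), ⋃ l ∈ Finset.range (2^(2*n)), EV Y a b δ n k l)

lemma measure_Bad_le (P : Measure Ω) (Y : ℝ × ℝ → Ω → E) (a b : ℝ) (δ : ℕ → ℝ)
    (n : ℕ) (εn : ℝ)
    (hYn : ∀ p q : ℝ × ℝ, p ∈ grid n ∩ Rect a b → q ∈ grid n ∩ Rect a b → IsNN n p q →
      P {ω | δ n < ‖Y p ω - Y q ω‖} ≤ ENNReal.ofReal εn) :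
    P (Bad Y a b δ n) ≤ 4 * 2^(6*n) * ENNReal.ofReal εn := by
  have hEH : ∀ k l : ℕ, P (EH Y a b δ n k l) ≤ ENNReal.ofReal εn := by
    intro k l
    rw [EH]
    split_ifs with h
    · refine hYn (pt n (k+1) l) (pt n k l) ⟨pt_mem_grid _ _ _, h.2⟩ ⟨pt_mem_grid _ _ _, h.1⟩ ?_
      left
      constructor
      · show |((k+1:ℕ):ℝ) * 2 ^ (-(4*n:ℤ)) - (k:ℝ) * 2 ^ (-(4*n:ℤ))| = 2 ^ (-(4*n:ℤ))
        rw [show ((k+1:ℕ):ℝ) * 2 ^ (-(4*n:ℤ)) - (k:ℝ) * 2 ^ (-(4*n:ℤ)) = 2 ^ (-(4*n:ℤ)) by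
          push_cast; ring]
        exact abs_of_nonneg (two_zpow_pos _).le
      · rfl
    · simp
  have hEV : ∀ k l : ℕ, P (EV Y a b δ n k l) ≤ ENNReal.ofReal εn := by
    intro k l
    rw [EV]
    split_ifs with h
    · refine hYn (pt n k (l+1)) (pt n k l) ⟨pt_mem_grid _ _ _, h.2⟩ ⟨pt_mem_grid _ _ _, h.1⟩ ?_
      right
      constructor
      · rfl
      · show |((l+1:ℕ):ℝ) * 2 ^ (-(2*n:ℤ)) - (l:ℝ) * 2 ^ (-(2*n:ℤ))| = 2 ^ (-(2*n:ℤ))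
        rw [show ((l+1:ℕ):ℝ) * 2 ^ (-(2*n:ℤ)) - (l:ℝ) * 2 ^ (-(2*n:ℤ)) = 2 ^ (-(2*n:ℤ)) by
          push_cast; ring]
        exact abs_of_nonneg (two_zpow_pos _).le
    · simp
  have hsumH : P (⋃ k ∈ Finset.range (2^(4*n)), ⋃ l ∈ Finset.range (2^(2*n)+1), EH Y a b δ n k l)
      ≤ (2^(4*n) * (2^(2*n)+1) : ℕ) * ENNReal.ofReal εn := by
    refine le_trans (measure_biUnion_finset_le _ _) ?_
    calc ∑ k ∈ Finset.range (2^(4*n)), P (⋃ l ∈ Finset.range (2^(2*n)+1), EH Y a b δ n k l)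
        ≤ ∑ k ∈ Finset.range (2^(4*n)), ∑ l ∈ Finset.range (2^(2*n)+1), P (EH Y a b δ n k l) :=
          Finset.sum_le_sum (fun k _ => measure_biUnion_finset_le _ _)
      _ ≤ ∑ _k ∈ Finset.range (2^(4*n)), ∑ _l ∈ Finset.range (2^(2*n)+1), ENNReal.ofReal εn :=
          Finset.sum_le_sum (fun k _ => Finset.sum_le_sum (fun l _ => hEH k l))
      _ = (2^(4*n) * (2^(2*n)+1) : ℕ) * ENNReal.ofReal εn := by
          simp [Finset.sum_const, mul_assoc]
  have hsumV : P (⋃ k ∈ Finset.range (2^(4*n)+1), ⋃ l ∈ Finset.range (2^(2*n)), EV Y a b δ n k l)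
      ≤ ((2^(4*n)+1) * 2^(2*n) : ℕ) * ENNReal.ofReal εn := by
    refine le_trans (measure_biUnion_finset_le _ _) ?_
    calc ∑ k ∈ Finset.range (2^(4*n)+1), P (⋃ l ∈ Finset.range (2^(2*n)), EV Y a b δ n k l)
        ≤ ∑ k ∈ Finset.range (2^(4*n)+1), ∑ l ∈ Finset.range (2^(2*n)), P (EV Y a b δ n k l) :=
          Finset.sum_le_sum (fun k _ => measure_biUnion_finset_le _ _)
      _ ≤ ∑ _k ∈ Finset.range (2^(4*n)+1), ∑ _l ∈ Finset.range (2^(2*n)), ENNReal.ofReal εn :=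
          Finset.sum_le_sum (fun k _ => Finset.sum_le_sum (fun l _ => hEV k l))
      _ = ((2^(4*n)+1) * 2^(2*n) : ℕ) * ENNReal.ofReal εn := by
          simp [Finset.sum_const, mul_assoc]
  have hcount : ((2^(4*n) * (2^(2*n)+1) + (2^(4*n)+1) * 2^(2*n) : ℕ) : ℝ≥0∞)
      ≤ 4 * 2^(6*n) := by
    have h1 : 2^(4*n) * (2^(2*n)+1) + (2^(4*n)+1) * 2^(2*n) ≤ 4 * 2^(6*n) := by
      have e : 2^(4*n) * 2^(2*n) = 2^(6*n) := by
        rw [← pow_add]; congr 1; omega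
      have i1 : 2^(4*n) ≤ 2^(6*n) := Nat.pow_le_pow_right (by norm_num) (by omega)
      have i2 : 2^(2*n) ≤ 2^(6*n) := Nat.pow_le_pow_right (by norm_num) (by omega)
      calc 2^(4*n) * (2^(2*n)+1) + (2^(4*n)+1) * 2^(2*n)
          = 2^(4*n) * 2^(2*n) + 2^(4*n) + (2^(4*n) * 2^(2*n) + 2^(2*n)) := by ring
        _ = 2^(6*n) + 2^(4*n) + (2^(6*n) + 2^(2*n)) := by rw [e]
        _ ≤ 2^(6*n) + 2^(6*n) + (2^(6*n) + 2^(6*n)) := by omega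
        _ = 4 * 2^(6*n) := by ring
    calc ((2^(4*n) * (2^(2*n)+1) + (2^(4*n)+1) * 2^(2*n) : ℕ) : ℝ≥0∞)
        ≤ ((4 * 2^(6*n) : ℕ) : ℝ≥0∞) := by exact_mod_cast h1
      _ = 4 * 2^(6*n) := by push_cast; ring
  calc P (Bad Y a b δ n)
      ≤ P (⋃ k ∈ Finset.range (2^(4*n)), ⋃ l ∈ Finset.range (2^(2*n)+1), EH Y a b δ n k l) +
        P (⋃ k ∈ Finset.range (2^(4*n)+1), ⋃ l ∈ Finset.range (2^(2*n)), EV Y a b δ n k l) :=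
        measure_union_le _ _
    _ ≤ (2^(4*n) * (2^(2*n)+1) : ℕ) * ENNReal.ofReal εn +
        ((2^(4*n)+1) * 2^(2*n) : ℕ) * ENNReal.ofReal εn := add_le_add hsumH hsumV
    _ = ((2^(4*n) * (2^(2*n)+1) + (2^(4*n)+1) * 2^(2*n) : ℕ) : ℝ≥0∞) * ENNReal.ofReal εn := by
        push_cast; ring
    _ ≤ 4 * 2^(6*n) * ENNReal.ofReal εn := mul_le_mul_left hcount _

end Bad

lemma cell_coord {K x : ℕ} {c : ℕ} {z : ℤ} (hz : z = -(c:ℤ))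
    (h1 : (K:ℝ) * 2 ^ z ≤ (x:ℝ) * 2 ^ z) (h2 : (x:ℝ) * 2 ^ z ≤ ((K:ℝ)+1) * 2 ^ z) :
    K ≤ x ∧ x ≤ K + 1 := by
  have hpos := two_zpow_pos z
  constructor
  · exact_mod_cast le_of_mul_le_mul_right h1 hpos
  · have hx : (x:ℝ) ≤ (K:ℝ)+1 := le_of_mul_le_mul_right h2 hpos
    exact_mod_cast hx

end ChainAux

open ChainAux

theorem chaining_probability_estimate
    (d : ℕ) (Ω : Type) [MeasurableSpace Ω] (P : Measure Ω) [IsProbabilityMeasure P]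
    (a b : ℝ) (ha : a ∈ Set.Icc (0:ℝ) 1) (hb : b ∈ Set.Icc (0:ℝ) 1)
    (R₁ : Set (ℝ × ℝ)) (hR₁ : R₁ = Set.Icc 0 a ×ˢ Set.Icc 0 b)
    (Y : ℝ × ℝ → Ω → EuclideanSpace ℝ (Fin d))
    (nR₁ : ℕ) (hnR₁ : IsGreatest {n : ℕ | InSingleRect R₁ n} nR₁)
    (δ ε : ℕ → ℝ) (hδ : ∀ n, 0 ≤ δ n) (hε : ∀ n, 0 ≤ ε n)
    (hY : ∀ n : ℕ, nR₁ ≤ n → ∀ p q : ℝ × ℝ, p ∈ grid n ∩ R₁ → q ∈ grid n ∩ R₁ →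
      IsNN n p q → P {ω | δ n < ‖Y p ω - Y q ω‖} ≤ ENNReal.ofReal (ε n)) :
    P {ω | ¬ ∀ p q : ℝ × ℝ, p ∈ (⋃ n, grid n) ∩ R₁ → q ∈ (⋃ n, grid n) ∩ R₁ →
        (‖Y p ω - Y q ω‖₊ : ℝ≥0∞) ≤
          40 * ∑' n : ℕ, ENNReal.ofReal (δ (⌊Real.logb 2 (1 / Delta (p - q))⌋₊ + n))}
      ≤ 4 * ∑' n : ℕ, (2 : ℝ≥0∞) ^ (6 * (nR₁ + n)) * ENNReal.ofReal (ε (nR₁ + n)) := by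
  classical
  subst hR₁
  rw [Set.mem_Icc] at ha hb
  have hRect : (Set.Icc (0:ℝ) a ×ˢ Set.Icc (0:ℝ) b) = Rect a b := rfl
  rw [hRect] at hY hnR₁ ⊢
  have hsub : {ω | ¬ ∀ p q : ℝ × ℝ, p ∈ (⋃ n, grid n) ∩ Rect a b →
        q ∈ (⋃ n, grid n) ∩ Rect a b →
        (‖Y p ω - Y q ω‖₊ : ℝ≥0∞) ≤
          40 * ∑' n : ℕ, ENNReal.ofReal (δ (⌊Real.logb 2 (1 / Delta (p - q))⌋₊ + n))}
      ⊆ ⋃ m, Bad Y a b δ (nR₁ + m) := by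
    intro ω hω
    by_contra hBad
    refine hω ?_
    simp only [Set.mem_iUnion, not_exists] at hBad
    have good : ∀ n, nR₁ ≤ n → ω ∉ Bad Y a b δ n := by
      intro n hn
      obtain ⟨m, rfl⟩ := Nat.exists_eq_add_of_le hn
      exact hBad m
    have goodH : ∀ n, nR₁ ≤ n → ∀ k l : ℕ, pt n k l ∈ Rect a b → pt n (k+1) l ∈ Rect a b →
        ‖Y (pt n (k+1) l) ω - Y (pt n k l) ω‖ ≤ δ n := by
      intro n hn k l h1 h2
      by_contra hgt
      push_neg at hgt
      refine good n hn ?_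
      have hk : k < 2^(4*n) := by
        have := coord_le (c := 4*n) (by push_cast; ring)
          (le_trans (pt_mem_rect_iff.mp h2).1 ha.2)
        omega
      have hl : l < 2^(2*n)+1 := by
        have := coord_le (c := 2*n) (by push_cast; ring)
          (le_trans (pt_mem_rect_iff.mp h1).2 hb.2)
        omega
      refine Set.mem_union_left _ ?_
      simp only [Set.mem_iUnion]
      exact ⟨k, Finset.mem_range.mpr hk, l, Finset.mem_range.mpr hl, by
        rw [EH, if_pos ⟨h1, h2⟩]; exact hgt⟩
    have goodV : ∀ n, nR₁ ≤ n → ∀ k l : ℕ, pt n k l ∈ Rect a b → pt n k (l+1) ∈ Rect a b →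
        ‖Y (pt n k (l+1)) ω - Y (pt n k l) ω‖ ≤ δ n := by
      intro n hn k l h1 h2
      by_contra hgt
      push_neg at hgt
      refine good n hn ?_
      have hk : k < 2^(4*n)+1 := by
        have := coord_le (c := 4*n) (by push_cast; ring)
          (le_trans (pt_mem_rect_iff.mp h1).1 ha.2)
        omega
      have hl : l < 2^(2*n) := by
        have := coord_le (c := 2*n) (by push_cast; ring)
          (le_trans (pt_mem_rect_iff.mp h2).2 hb.2)
        omega
      refine Set.mem_union_right _ ?_
      simp only [Set.mem_iUnion]
      exact ⟨k, Finset.mem_range.mpr hk, l, Finset.mem_range.mpr hl, by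
        rw [EV, if_pos ⟨h1, h2⟩]; exact hgt⟩
    intro p q hp hq
    obtain ⟨hpU, hpR⟩ := hp
    obtain ⟨hqU, hqR⟩ := hq
    obtain ⟨m₁, hpg⟩ := Set.mem_iUnion.mp hpU
    obtain ⟨m₂, hqg⟩ := Set.mem_iUnion.mp hqU
    by_cases hpq : p = q
    · subst hpq
      simp
    have hDne : Delta (p - q) ≠ 0 := fun h => hpq (delta_eq_zero_iff h)
    set n₀ := ⌊Real.logb 2 (1 / Delta (p - q))⌋₊ with hn₀def
    set ns := max n₀ nR₁ with hnsdef
    have hn₀ns : n₀ ≤ ns := le_max_left _ _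
    have htelp : ‖Y p ω - Y (proj ns p) ω‖ ≤ 18 * ∑ j ∈ Finset.range (m₁ - ns), δ (ns+1+j) :=
      telescope (fun r => Y r ω) δ hδ nR₁ goodH goodV hpg hpR (m₁ - ns) ns
        (le_max_right _ _) (by omega)
    have htelq : ‖Y q ω - Y (proj ns q) ω‖ ≤ 18 * ∑ j ∈ Finset.range (m₂ - ns), δ (ns+1+j) :=
      telescope (fun r => Y r ω) δ hδ nR₁ goodH goodV hqg hqR (m₂ - ns) ns
        (le_max_right _ _) (by omega)
    have hpx : 0 ≤ p.1 := (mem_rect_iff.mp hpR).1.1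
    have hpy : 0 ≤ p.2 := (mem_rect_iff.mp hpR).2.1
    have hqx : 0 ≤ q.1 := (mem_rect_iff.mp hqR).1.1
    have hqy : 0 ≤ q.2 := (mem_rect_iff.mp hqR).2.1
    have hclose : (⌊p.1 * 2^(4*ns)⌋₊ ≤ ⌊q.1 * 2^(4*ns)⌋₊ + 1 ∧
          ⌊q.1 * 2^(4*ns)⌋₊ ≤ ⌊p.1 * 2^(4*ns)⌋₊ + 1) ∧
        (⌊p.2 * 2^(2*ns)⌋₊ ≤ ⌊q.2 * 2^(2*ns)⌋₊ + 1 ∧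
          ⌊q.2 * 2^(2*ns)⌋₊ ≤ ⌊p.2 * 2^(2*ns)⌋₊ + 1) := by
      rcases le_or_gt nR₁ n₀ with hcase | hcase
      · have hns : ns = n₀ := max_eq_left hcase
        have hd := delta_bound ha.2 hb.2 hpR hqR hDne
        rw [hns]
        constructor
        · refine floor_close (mul_nonneg hpx (by positivity))
            (mul_nonneg hqx (by positivity)) ?_
          rw [← sub_mul, abs_mul, abs_of_nonneg (show (0:ℝ) ≤ 2^(4*n₀) by positivity)]
          exact hd.1
        · refine floor_close (mul_nonneg hpy (by positivity))
            (mul_nonneg hqy (by positivity)) ?_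
          rw [← sub_mul, abs_mul, abs_of_nonneg (show (0:ℝ) ≤ 2^(2*n₀) by positivity)]
          exact hd.2
      · have hns : ns = nR₁ := max_eq_right hcase.le
        obtain ⟨K, L, hKL⟩ := hnR₁.1
        have h1 := hKL ⟨⟨⌊p.1 * 2^(4*nR₁)⌋₊, ⌊p.2 * 2^(2*nR₁)⌋₊, rfl⟩, proj_mem hpR nR₁⟩
        have h2 := hKL ⟨⟨⌊q.1 * 2^(4*nR₁)⌋₊, ⌊q.2 * 2^(2*nR₁)⌋₊, rfl⟩, proj_mem hqR nR₁⟩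
        have c1p := cell_coord (K := K) (x := ⌊p.1 * 2^(4*nR₁)⌋₊) (c := 4*nR₁)
          (by push_cast; ring) h1.1.1 h1.1.2
        have c1q := cell_coord (K := K) (x := ⌊q.1 * 2^(4*nR₁)⌋₊) (c := 4*nR₁)
          (by push_cast; ring) h2.1.1 h2.1.2
        have c2p := cell_coord (K := L) (x := ⌊p.2 * 2^(2*nR₁)⌋₊) (c := 2*nR₁)
          (by push_cast; ring) h1.2.1 h1.2.2
        have c2q := cell_coord (K := L) (x := ⌊q.2 * 2^(2*nR₁)⌋₊) (c := 2*nR₁)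
          (by push_cast; ring) h2.2.1 h2.2.2
        rw [hns]
        exact ⟨⟨by omega, by omega⟩, ⟨by omega, by omega⟩⟩
    have hmid : ‖Y (proj ns p) ω - Y (proj ns q) ω‖ ≤ 2 * δ ns := by
      have h2 := chain2 (fun r => Y r ω) (hδ ns) (goodH ns (le_max_right _ _))
        (goodV ns (le_max_right _ _)) ⌊p.1 * 2^(4*ns)⌋₊ ⌊p.2 * 2^(2*ns)⌋₊
        ⌊q.1 * 2^(4*ns)⌋₊ ⌊q.2 * 2^(2*ns)⌋₊ (proj_mem hpR ns) (proj_mem hqR ns)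
      refine le_trans h2 ?_
      have a1 : |(⌊p.1 * 2^(4*ns)⌋₊:ℝ) - (⌊q.1 * 2^(4*ns)⌋₊:ℝ)| ≤ 1 :=
        abs_cast_sub_le_one hclose.1.1 hclose.1.2
      have a2 : |(⌊p.2 * 2^(2*ns)⌋₊:ℝ) - (⌊q.2 * 2^(2*ns)⌋₊:ℝ)| ≤ 1 :=
        abs_cast_sub_le_one hclose.2.1 hclose.2.2
      have hs2 : |(⌊p.1 * 2^(4*ns)⌋₊:ℝ) - (⌊q.1 * 2^(4*ns)⌋₊:ℝ)| +
          |(⌊p.2 * 2^(2*ns)⌋₊:ℝ) - (⌊q.2 * 2^(2*ns)⌋₊:ℝ)| ≤ 2 := by linarith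
      exact mul_le_mul_of_nonneg_right hs2 (hδ ns)
    have htotal : ‖Y p ω - Y q ω‖ ≤
        18 * (∑ j ∈ Finset.range (m₁ - ns), δ (ns+1+j)) + 2 * δ ns +
        18 * (∑ j ∈ Finset.range (m₂ - ns), δ (ns+1+j)) := by
      have tri1 : ‖Y p ω - Y q ω‖ ≤ ‖Y p ω - Y (proj ns p) ω‖ +
          ‖Y (proj ns p) ω - Y (proj ns q) ω‖ + ‖Y (proj ns q) ω - Y q ω‖ := by
        calc ‖Y p ω - Y q ω‖
            ≤ ‖Y p ω - Y (proj ns p) ω‖ + ‖Y (proj ns p) ω - Y q ω‖ :=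
              norm_sub_triangle _ _ _
          _ ≤ ‖Y p ω - Y (proj ns p) ω‖ +
              (‖Y (proj ns p) ω - Y (proj ns q) ω‖ + ‖Y (proj ns q) ω - Y q ω‖) :=
              add_le_add le_rfl (norm_sub_triangle _ _ _)
          _ = _ := by ring
      have hrev : ‖Y (proj ns q) ω - Y q ω‖ = ‖Y q ω - Y (proj ns q) ω‖ := norm_sub_rev _ _
      rw [hrev] at tri1
      linarith
    rw [← enorm_eq_nnnorm, ← ofReal_norm]
    set g : ℕ → ℝ≥0∞ := fun j => ENNReal.ofReal (δ (n₀ + j)) with hg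
    have hgT : ∀ c : ℕ, (∑' j, g (c + j)) ≤ ∑' j, g j := fun c =>
      ENNReal.summable.tsum_le_tsum_of_inj (c + ·) (add_right_injective c) (fun _ _ => zero_le)
        (fun n => le_rfl) ENNReal.summable
    have hterm : ENNReal.ofReal (δ ns) ≤ ∑' j, g j := by
      have hc : n₀ + (ns - n₀) = ns := Nat.add_sub_cancel' hn₀ns
      have e : ENNReal.ofReal (δ ns) = g (ns - n₀) := by
        simp only [hg, hc]
      rw [e]; exact ENNReal.le_tsum _
    have hsum : ∀ (t : ℕ), ENNReal.ofReal (∑ j ∈ Finset.range t, δ (ns+1+j)) ≤ ∑' j, g j := by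
      intro t
      rw [ENNReal.ofReal_sum_of_nonneg (fun j _ => hδ _)]
      have hc : n₀ + (ns+1-n₀) = ns+1 := Nat.add_sub_cancel' (Nat.le_succ_of_le hn₀ns)
      have e : ∀ j, ENNReal.ofReal (δ (ns+1+j)) = g ((ns+1-n₀) + j) := by
        intro j
        simp only [hg, ← Nat.add_assoc, hc]
      calc ∑ j ∈ Finset.range t, ENNReal.ofReal (δ (ns+1+j))
          = ∑ j ∈ Finset.range t, g ((ns+1-n₀)+j) := Finset.sum_congr rfl (fun j _ => e j)
        _ ≤ ∑' j, g ((ns+1-n₀)+j) := ENNReal.sum_le_tsum _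
        _ ≤ ∑' j, g j := hgT _
    have hofReal18 : ENNReal.ofReal (18:ℝ) = (18:ℝ≥0∞) := by
      rw [show (18:ℝ) = ((18:ℕ):ℝ) by norm_num, ENNReal.ofReal_natCast]
      norm_num
    have hofReal2 : ENNReal.ofReal (2:ℝ) = (2:ℝ≥0∞) := by
      rw [show (2:ℝ) = ((2:ℕ):ℝ) by norm_num, ENNReal.ofReal_natCast]
      norm_num
    calc ENNReal.ofReal ‖Y p ω - Y q ω‖
        ≤ ENNReal.ofReal (18 * (∑ j ∈ Finset.range (m₁ - ns), δ (ns+1+j)) + 2 * δ ns +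
            18 * (∑ j ∈ Finset.range (m₂ - ns), δ (ns+1+j))) := ENNReal.ofReal_le_ofReal htotal
      _ ≤ ENNReal.ofReal (18 * (∑ j ∈ Finset.range (m₁ - ns), δ (ns+1+j)) + 2 * δ ns) +
            ENNReal.ofReal (18 * (∑ j ∈ Finset.range (m₂ - ns), δ (ns+1+j))) :=
          ENNReal.ofReal_add_le
      _ ≤ ENNReal.ofReal (18 * (∑ j ∈ Finset.range (m₁ - ns), δ (ns+1+j))) +
            ENNReal.ofReal (2 * δ ns) +
            ENNReal.ofReal (18 * (∑ j ∈ Finset.range (m₂ - ns), δ (ns+1+j))) :=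
          add_le_add ENNReal.ofReal_add_le le_rfl
      _ ≤ 18 * (∑' j, g j) + 2 * (∑' j, g j) + 18 * (∑' j, g j) := by
          refine add_le_add (add_le_add ?_ ?_) ?_
          · rw [ENNReal.ofReal_mul (by norm_num : (0:ℝ) ≤ 18), hofReal18]
            exact mul_le_mul_right (hsum _) _
          · rw [ENNReal.ofReal_mul (by norm_num : (0:ℝ) ≤ 2), hofReal2]
            exact mul_le_mul_right hterm _
          · rw [ENNReal.ofReal_mul (by norm_num : (0:ℝ) ≤ 18), hofReal18]
            exact mul_le_mul_right (hsum _) _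
      _ = 38 * (∑' j, g j) := by ring
      _ ≤ 40 * (∑' j, g j) := mul_le_mul_left (by norm_num) _
  refine le_trans (measure_mono hsub) ?_
  refine le_trans (measure_iUnion_le _) ?_
  refine le_trans (ENNReal.tsum_le_tsum (fun m => measure_Bad_le P Y a b δ (nR₁+m)
    (ε (nR₁+m)) (hY (nR₁+m) (by omega)))) ?_
  simp only [mul_assoc]
  rw [ENNReal.tsum_mul_left]
end
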